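/- arXiv:1309.5530 — 5 statements merged into one kernel-verified Lean document; each statement's English description precedes it below -/
import Mathlib

section
/- Let A = Mat_q(n) be the quantum matrix algebra and ω_i = Σ_j a_{ij} x_j in A ⊗ Λ_n. Then the 1-forms ω_i satisfy the quantum exterior relations: ω_i ∧ ω_i = 0 for all i, and ω_j ∧ ω_i = -q ω_i ∧ ω_j for i < j. -/
lemma pair_sum_zero {E : Type*} [AddCommGroup E] {n : ℕ} (f : Fin n → Fin n → E)
    (hdiag : ∀ k, f k k = 0) (hanti : ∀ k l, k < l → f k l + f l k = 0) :
    ∑ k, ∑ l, f k l = 0 := by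
  rw [← Finset.sum_product']
  apply Finset.sum_ninvolution (fun p => (p.2, p.1))
  · rintro ⟨k, l⟩
    rcases lt_trichotomy k l with h | rfl | h
    · exact hanti k l h
    · simp [hdiag]
    · rw [add_comm]; exact hanti l k h
  · rintro ⟨k, l⟩ hne heq
    simp only [Prod.mk.injEq] at heq
    obtain ⟨rfl, -⟩ := heq
    exact hne (hdiag _)
  · simp
  · simp

/-- the 1-forms `ω_i = Σ_j a_{ij} x_j` in `A ⊗ Λ_n` satisfy the quantum
exterior relations `ω_i ∧ ω_i = 0` and `ω_j ∧ ω_i = -q ω_i ∧ ω_j` for `i < j`. -/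
theorem quantum_one_forms_exterior_relations
    (F : Type*) [Field F] (q : F) (hq : q ≠ 0) (n : ℕ)
    (E : Type*) [Ring E] [Algebra F E]
    (a : Fin n → Fin n → E) (x : Fin n → E)
    -- quantum matrix relations for the `a_{ij}`
    (ha1 : ∀ i k l, k < l → a i k * a i l = q • (a i l * a i k))
    (ha2 : ∀ i j k, i < j → a i k * a j k = q • (a j k * a i k))
    (ha3 : ∀ i j k l, i < j → k < l → a j k * a i l = a i l * a j k)
    (ha4 : ∀ i j k l, i < j → k < l →
      a i k * a j l - a j l * a i k = (q - q⁻¹) • (a i l * a j k))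
    -- quantum exterior algebra relations for the `x_i`
    (hx1 : ∀ i, x i * x i = 0)
    (hx2 : ∀ i j, i < j → x j * x i = (-q) • (x i * x j))
    -- the `a_{ij}` commute with the `x_k`
    (hcomm : ∀ i j k, a i j * x k = x k * a i j) :
    (∀ i, (∑ j, a i j * x j) * (∑ j, a i j * x j) = 0) ∧
    (∀ i j, i < j →
      (∑ k, a j k * x k) * (∑ k, a i k * x k)
        = (-q) • ((∑ k, a i k * x k) * (∑ k, a j k * x k))) := by
  have key : ∀ i j k l, (a i k * x k) * (a j l * x l) = a i k * a j l * (x k * x l) := by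
    intro i j k l
    rw [mul_assoc (a i k), ← mul_assoc (x k), ← hcomm, mul_assoc, mul_assoc]
  constructor
  · intro i
    rw [Fintype.sum_mul_sum]
    simp_rw [key]
    apply pair_sum_zero
    · intro k; rw [hx1, mul_zero]
    · intro k l hkl
      rw [hx2 k l hkl, ha1 i k l hkl]
      simp [smul_mul_assoc, mul_smul_comm]
  · intro i j hij
    rw [Fintype.sum_mul_sum, Fintype.sum_mul_sum, Finset.smul_sum]
    simp_rw [Finset.smul_sum, key]
    rw [← sub_eq_zero, ← Finset.sum_sub_distrib]
    simp_rw [← Finset.sum_sub_distrib]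
    apply pair_sum_zero
    · intro k; rw [hx1, mul_zero, mul_zero, smul_zero, sub_zero]
    · intro k l hkl
      have h4 : a i k * a j l = a j l * a i k + (q - q⁻¹) • (a i l * a j k) := by
        rw [← ha4 i j k l hij hkl]; abel
      rw [hx2 k l hkl, ha3 i j k l hij hkl, h4]
      have hqq : q * (q - q⁻¹) = q * q - 1 := by
        field_simp
      simp only [add_mul, smul_mul_assoc, mul_smul_comm, neg_smul, smul_smul,
        smul_add, smul_neg, smul_sub, sub_neg_eq_add, neg_neg, mul_neg, neg_mul]
      rw [hqq]
      module
end

section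
/- For any sequence of indices i_1,...,i_n in {1,...,n}, the alternating sum Σ_{σ∈S_n} (-q)^{ℓ(σ)} a_{i_1,σ(1)}···a_{i_n,σ(n)} equals 0 if two of the i's coincide, and equals (-q)^{ℓ(π)} det_q(A) if the i's are distinct, where π is the permutation sending k to i_k. -/
/-- The inversion number `ℓ(σ)` of a permutation. -/
def inversionNumber {n : ℕ} (σ : Equiv.Perm (Fin n)) : ℕ :=
  ((Finset.univ : Finset (Fin n × Fin n)).filter
    (fun p => p.1 < p.2 ∧ σ p.2 < σ p.1)).card

namespace QDetAux

/-- adjacent swap keeps order except on the pair itself -/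
lemma swap_lt {n : ℕ} {j0 j1 p r : Fin n} (hj : (j0:ℕ) + 1 = j1)
    (hpr : p < r) (hne : ¬(p = j0 ∧ r = j1)) :
    Equiv.swap j0 j1 p < Equiv.swap j0 j1 r := by
  simp only [Equiv.swap_apply_def, Fin.lt_def, Fin.ext_iff] at *
  split_ifs <;> omega

lemma inv_mul_swap {n : ℕ} (σ : Equiv.Perm (Fin n)) {j0 j1 : Fin n}
    (hj : (j0:ℕ) + 1 = j1) (h : σ j0 < σ j1) :
    inversionNumber (σ * Equiv.swap j0 j1) = inversionNumber σ + 1 := by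
  set s := Equiv.swap j0 j1 with hs
  have hj01 : j0 < j1 := by rw [Fin.lt_def]; omega
  have hpair : (j0, j1) ∈ (Finset.univ : Finset (Fin n × Fin n)).filter
      (fun p => p.1 < p.2 ∧ (σ * s) p.2 < (σ * s) p.1) := by
    simp [hs, Equiv.swap_apply_left, Equiv.swap_apply_right, hj01, h, Equiv.Perm.mul_apply]
  have key : inversionNumber σ =
      (((Finset.univ : Finset (Fin n × Fin n)).filter
        (fun p => p.1 < p.2 ∧ (σ * s) p.2 < (σ * s) p.1)).erase (j0, j1)).card := by
    apply Finset.card_bij' (fun p _ => (s p.1, s p.2)) (fun p _ => (s p.1, s p.2))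
    · intro p hp
      simp only [inversionNumber, Finset.mem_filter, Finset.mem_univ, true_and] at hp
      have hne : ¬(p.1 = j0 ∧ p.2 = j1) := by
        rintro ⟨h1, h2⟩; rw [h1, h2] at hp; exact absurd hp.2 (not_lt.2 h.le)
      have hlt := swap_lt hj hp.1 hne
      have hne2 : (s p.1, s p.2) ≠ (j0, j1) := by
        intro hc
        have h1 : s p.1 = j0 := congrArg Prod.fst hc
        have h2 : s p.2 = j1 := congrArg Prod.snd hc
        have : p.1 = j1 := by
          have := congrArg s h1; simpa [hs] using this
        have : p.2 = j0 := by
          have := congrArg s h2; simpa [hs] using this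
        have : j1 < j0 := by
          rw [← ‹p.1 = j1›, ← ‹p.2 = j0›]; exact hp.1
        exact absurd this (not_lt.2 hj01.le)
      refine Finset.mem_erase.2 ⟨hne2, ?_⟩
      show (s p.1, s p.2) ∈ (Finset.univ : Finset (Fin n × Fin n)).filter
        (fun p => p.1 < p.2 ∧ (σ * s) p.2 < (σ * s) p.1)
      rw [Finset.mem_filter]
      simp only [Finset.mem_filter, Finset.mem_univ, true_and, Equiv.Perm.mul_apply]
      refine ⟨hlt, ?_⟩
      simpa [hs, Equiv.swap_apply_self] using hp.2
    · intro p hp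
      rw [Finset.mem_erase] at hp
      obtain ⟨hne, hp⟩ := hp
      change p ∈ (Finset.univ : Finset (Fin n × Fin n)).filter
        (fun p => p.1 < p.2 ∧ (σ * s) p.2 < (σ * s) p.1) at hp
      rw [Finset.mem_filter] at hp
      simp only [Finset.mem_filter, Finset.mem_univ, true_and, Equiv.Perm.mul_apply] at hp
      have hne' : ¬(p.1 = j0 ∧ p.2 = j1) := by
        rintro ⟨h1, h2⟩; exact hne (by rw [← h1, ← h2])
      have hlt := swap_lt hj hp.1 hne'
      simp only [inversionNumber, Finset.mem_filter, Finset.mem_univ, true_and]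
      refine ⟨hlt, ?_⟩
      simpa [hs, Equiv.swap_apply_self] using hp.2
    · intro p _; simp [hs, Equiv.swap_apply_self]
    · intro p _; simp [hs, Equiv.swap_apply_self]
  rw [key]
  exact (Finset.card_erase_add_one hpair).symm ▸ rfl

lemma mem_take_finRange {n m : ℕ} {k : Fin n} (h : k ∈ (List.finRange n).take m) :
    (k : ℕ) < m := by
  rw [List.mem_iff_getElem] at h
  obtain ⟨i, hi, hk⟩ := h
  rw [List.getElem_take, List.getElem_finRange] at hk
  simp only [List.length_take, List.length_finRange, lt_min_iff] at hi
  rw [Fin.ext_iff] at hk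
  simp at hk
  omega

lemma mem_drop_finRange {n m : ℕ} {k : Fin n} (h : k ∈ (List.finRange n).drop m) :
    m ≤ (k : ℕ) := by
  rw [List.mem_iff_getElem] at h
  obtain ⟨i, hi, hk⟩ := h
  rw [List.getElem_drop, List.getElem_finRange] at hk
  rw [Fin.ext_iff] at hk
  simp at hk
  omega

lemma prod_split {A : Type*} [Ring A] {n : ℕ} (g : Fin n → A) {j0 j1 : Fin n}
    (hj : (j0:ℕ) + 1 = j1) :
    ((List.finRange n).map g).prod =
      (((List.finRange n).take j0).map g).prod * g j0 * g j1 *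
        (((List.finRange n).drop ((j0:ℕ) + 2)).map g).prod := by
  have h0 : (j0 : ℕ) < (List.finRange n).length := by simp
  have h1 : (j0 : ℕ) + 1 < (List.finRange n).length := by simp; omega
  conv_lhs => rw [← List.take_append_drop (j0 : ℕ) (List.finRange n)]
  rw [List.drop_eq_getElem_cons h0, List.drop_eq_getElem_cons h1]
  simp only [List.getElem_finRange, List.map_append, List.map_cons, List.prod_append,
    List.prod_cons]
  have e0 : (⟨(j0:ℕ), by simpa using h0⟩ : Fin n) = j0 := rfl
  have e1 : (⟨(j0:ℕ)+1, by simpa using h1⟩ : Fin n) = j1 := by ext; simpa using hj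
  rw [Fin.cast_mk, Fin.cast_mk, e0, e1]
  simp [mul_assoc, Nat.add_assoc]

variable {F : Type*} [Field F] {n : ℕ} {A : Type*} [Ring A] [Algebra F A]

/-- The row-generalized quantum determinant. -/
def D (q : F) (a : Fin n → Fin n → A) (f : Fin n → Fin n) : A :=
  ∑ σ : Equiv.Perm (Fin n), (-q) ^ inversionNumber σ •
    ((List.finRange n).map (fun k => a (f k) (σ k))).prod

lemma D_pair (q : F) (a : Fin n → Fin n → A) (f : Fin n → Fin n) {j0 j1 : Fin n}
    (hj : (j0:ℕ) + 1 = j1) :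
    D q a f = ∑ σ ∈ Finset.univ.filter (fun σ : Equiv.Perm (Fin n) => σ j0 < σ j1),
      (-q) ^ inversionNumber σ •
        ((((List.finRange n).take j0).map (fun k => a (f k) (σ k))).prod *
          (a (f j0) (σ j0) * a (f j1) (σ j1) - q • (a (f j0) (σ j1) * a (f j1) (σ j0))) *
          (((List.finRange n).drop ((j0:ℕ)+2)).map (fun k => a (f k) (σ k))).prod) := by
  classical
  set s := Equiv.swap j0 j1 with hs
  have hj01 : j0 ≠ j1 := by simp only [ne_eq, Fin.ext_iff]; omega
  have skey : ∀ k : Fin n, (k:ℕ) < j0 ∨ (j0:ℕ) + 2 ≤ k → s k = k := by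
    intro k hk
    apply Equiv.swap_apply_of_ne_of_ne <;> simp only [ne_eq, Fin.ext_iff] <;> omega
  set Fq : Equiv.Perm (Fin n) → A := fun σ => (-q) ^ inversionNumber σ •
    ((List.finRange n).map (fun k => a (f k) (σ k))).prod with hFq
  have hsplit := Finset.sum_filter_add_sum_filter_not (Finset.univ : Finset (Equiv.Perm (Fin n)))
    (fun σ => σ j0 < σ j1) Fq
  have hre : ∑ σ ∈ Finset.univ.filter (fun σ : Equiv.Perm (Fin n) => ¬ σ j0 < σ j1), Fq σ
      = ∑ σ ∈ Finset.univ.filter (fun σ : Equiv.Perm (Fin n) => σ j0 < σ j1), Fq (σ * s) := by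
    apply Finset.sum_nbij' (fun σ => σ * s) (fun σ => σ * s)
    · intro σ hσ
      simp only [Finset.mem_filter, Finset.mem_univ, true_and, not_lt] at hσ ⊢
      have hne : σ j1 ≠ σ j0 := fun hc => hj01 (σ.injective hc).symm
      have : σ j1 < σ j0 := lt_of_le_of_ne hσ hne
      simpa [hs, Equiv.Perm.mul_apply] using this
    · intro σ hσ
      simp only [Finset.mem_filter, Finset.mem_univ, true_and, not_lt] at hσ ⊢
      simpa [hs, Equiv.Perm.mul_apply] using hσ.le
    · intro σ _; ext k; simp [hs, Equiv.swap_apply_self, Equiv.Perm.mul_apply]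
    · intro σ _; ext k; simp [hs, Equiv.swap_apply_self, Equiv.Perm.mul_apply]
    · intro σ _; congr 1; rw [mul_assoc, hs, Equiv.swap_mul_self, mul_one]
  rw [D, ← hsplit, hre, ← Finset.sum_add_distrib]
  apply Finset.sum_congr rfl
  intro σ hσ
  simp only [Finset.mem_filter, Finset.mem_univ, true_and] at hσ
  have hinv := inv_mul_swap σ hj hσ
  have hprod1 := prod_split (A := A) (fun k => a (f k) (σ k)) hj
  have hprod2 := prod_split (A := A) (fun k => a (f k) ((σ * s) k)) hj
  have htake : ((List.finRange n).take (j0:ℕ)).map (fun k => a (f k) ((σ * s) k))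
      = ((List.finRange n).take (j0:ℕ)).map (fun k => a (f k) (σ k)) := by
    apply List.map_congr_left
    intro k hk
    have := mem_take_finRange hk
    rw [Equiv.Perm.mul_apply, skey k (Or.inl this)]
  have hdrop : ((List.finRange n).drop ((j0:ℕ)+2)).map (fun k => a (f k) ((σ * s) k))
      = ((List.finRange n).drop ((j0:ℕ)+2)).map (fun k => a (f k) (σ k)) := by
    apply List.map_congr_left
    intro k hk
    have := mem_drop_finRange hk
    rw [Equiv.Perm.mul_apply, skey k (Or.inr this)]
  have hmid0 : (σ * s) j0 = σ j1 := by simp [hs, Equiv.Perm.mul_apply]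
  have hmid1 : (σ * s) j1 = σ j0 := by simp [hs, Equiv.Perm.mul_apply]
  rw [hFq]
  simp only [hprod1, hprod2, hinv, htake, hdrop, hmid0, hmid1]
  set C := ((List.finRange n).take (j0:ℕ)).map (fun k => a (f k) (σ k)) with hC
  set M := ((List.finRange n).drop ((j0:ℕ)+2)).map (fun k => a (f k) (σ k)) with hM
  rw [hs, hinv, pow_succ]
  simp only [mul_smul, smul_sub, mul_sub, sub_mul, smul_mul_assoc, mul_smul_comm,
    neg_smul, smul_neg, mul_assoc]
  abel

lemma B_swap (q : F) (hq : q ≠ 0) (x y z w : A)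
    (h3 : z = y)
    (h4 : x - w = (q - q⁻¹) • y) :
    z - q • w = (-q) • (x - q • y) := by
  have hw : w = x - (q - q⁻¹) • y := by rw [← h4]; abel
  rw [h3, hw]
  have hqq : q * (q - q⁻¹) = q * q - 1 := by field_simp
  rw [smul_sub, smul_smul, hqq]
  rw [neg_smul, smul_sub, smul_smul]
  module

variable (q : F) (a : Fin n → Fin n → A)

lemma D_adj_zero (ha1 : ∀ i k l, k < l → a i k * a i l = q • (a i l * a i k))
    (f : Fin n → Fin n) {j0 j1 : Fin n} (hj : (j0:ℕ) + 1 = j1) (hf : f j0 = f j1) :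
    D q a f = 0 := by
  rw [D_pair q a f hj]
  apply Finset.sum_eq_zero
  intro σ hσ
  simp only [Finset.mem_filter, Finset.mem_univ, true_and] at hσ
  have hz : a (f j0) (σ j0) * a (f j1) (σ j1) - q • (a (f j0) (σ j1) * a (f j1) (σ j0)) = 0 := by
    rw [hf, ha1 (f j1) (σ j0) (σ j1) hσ, sub_self]
  rw [hz, mul_zero, zero_mul, smul_zero]

lemma D_swap_lt (hq : q ≠ 0)
    (ha3 : ∀ i j k l, i < j → k < l → a j k * a i l = a i l * a j k)
    (ha4 : ∀ i j k l, i < j → k < l →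
      a i k * a j l - a j l * a i k = (q - q⁻¹) • (a i l * a j k))
    (f : Fin n → Fin n) {j0 j1 : Fin n} (hj : (j0:ℕ) + 1 = j1) (hf : f j0 < f j1) :
    D q a (f ∘ Equiv.swap j0 j1) = (-q) • D q a f := by
  set s := Equiv.swap j0 j1 with hs
  have skey : ∀ k : Fin n, (k:ℕ) < j0 ∨ (j0:ℕ) + 2 ≤ k → s k = k := by
    intro k hk
    apply Equiv.swap_apply_of_ne_of_ne <;> simp only [ne_eq, Fin.ext_iff] <;> omega
  rw [D_pair q a _ hj, D_pair q a f hj, Finset.smul_sum]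
  apply Finset.sum_congr rfl
  intro σ hσ
  simp only [Finset.mem_filter, Finset.mem_univ, true_and] at hσ
  have htake : ((List.finRange n).take (j0:ℕ)).map (fun k => a ((f ∘ s) k) (σ k))
      = ((List.finRange n).take (j0:ℕ)).map (fun k => a (f k) (σ k)) := by
    apply List.map_congr_left
    intro k hk
    have := mem_take_finRange hk
    simp only [Function.comp_apply, skey k (Or.inl this)]
  have hdrop : ((List.finRange n).drop ((j0:ℕ)+2)).map (fun k => a ((f ∘ s) k) (σ k))
      = ((List.finRange n).drop ((j0:ℕ)+2)).map (fun k => a (f k) (σ k)) := by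
    apply List.map_congr_left
    intro k hk
    have := mem_drop_finRange hk
    simp only [Function.comp_apply, skey k (Or.inr this)]
  have hmid0 : (f ∘ s) j0 = f j1 := by simp [hs]
  have hmid1 : (f ∘ s) j1 = f j0 := by simp [hs]
  have hB : a (f j1) (σ j0) * a (f j0) (σ j1) - q • (a (f j1) (σ j1) * a (f j0) (σ j0))
      = (-q) • (a (f j0) (σ j0) * a (f j1) (σ j1) - q • (a (f j0) (σ j1) * a (f j1) (σ j0))) := by
    apply B_swap q hq
    · exact ha3 (f j0) (f j1) (σ j0) (σ j1) hf hσ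
    · exact ha4 (f j0) (f j1) (σ j0) (σ j1) hf hσ
  simp only [htake, hdrop, hmid0, hmid1, hB]
  rw [mul_smul_comm, smul_mul_assoc, smul_comm]

lemma D_eq_zero_of_eq (hq : q ≠ 0)
    (ha1 : ∀ i k l, k < l → a i k * a i l = q • (a i l * a i k))
    (ha3 : ∀ i j k l, i < j → k < l → a j k * a i l = a i l * a j k)
    (ha4 : ∀ i j k l, i < j → k < l →
      a i k * a j l - a j l * a i k = (q - q⁻¹) • (a i l * a j k)) :
    ∀ d : ℕ, ∀ f : Fin n → Fin n, ∀ p r : Fin n,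
      p < r → f p = f r → (r:ℕ) - p ≤ d → D q a f = 0 := by
  intro d
  induction d with
  | zero =>
    intro f p r hpr _ hd
    rw [Fin.lt_def] at hpr; omega
  | succ d ih =>
    intro f p r hpr hf hd
    rw [Fin.lt_def] at hpr
    by_cases hadj : (r:ℕ) = (p:ℕ) + 1
    · exact D_adj_zero q a ha1 f (j0 := p) (j1 := r) hadj.symm hf
    · -- r ≥ p + 2
      have hp1 : (p:ℕ) + 1 < n := by
        have := r.isLt; omega
      set j1 : Fin n := ⟨(p:ℕ) + 1, hp1⟩ with hj1
      have hj : (p:ℕ) + 1 = (j1:ℕ) := rfl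
      set s := Equiv.swap p j1 with hs
      set g : Fin n → Fin n := f ∘ s with hg
      have hsr : s r = r := by
        rw [hs]
        apply Equiv.swap_apply_of_ne_of_ne <;> simp only [ne_eq, Fin.ext_iff, hj1] <;> omega
      have hgr : g r = f r := by rw [hg]; simp [hsr]
      have hgj1 : g j1 = f p := by rw [hg]; simp [hs]
      have hgp : g p = f j1 := by rw [hg]; simp [hs]
      have hj1r : j1 < r := by rw [Fin.lt_def]; simp [hj1]; omega
      have hDg : D q a g = 0 := by
        apply ih g j1 r hj1r (by rw [hgj1, hgr, hf]) (by simp [hj1]; omega)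
      by_cases hpe : f p = f j1
      · exact D_adj_zero q a ha1 f (j0 := p) (j1 := j1) hj hpe
      · rcases lt_or_gt_of_ne hpe with hlt | hgt
        · -- D g = (-q) • D f
          have := D_swap_lt q a hq ha3 ha4 f (j0 := p) (j1 := j1) hj hlt
          rw [← hg] at this  -- maybe unnecessary
          rw [hDg] at this
          have := this.symm
          calc D q a f = (-q)⁻¹ • (-q) • D q a f := (inv_smul_smul₀ (by simpa using hq) _).symm
          _ = 0 := by rw [this, smul_zero]
        · -- g p = f j1 < f p = g j1, D (g∘s) = D f = (-q) • D g = 0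
          have hglt : g p < g j1 := by rw [hgp, hgj1]; exact hgt
          have hgs : g ∘ s = f := by
            funext k
            rw [hg]
            simp [hs, Equiv.swap_apply_self]
          have := D_swap_lt q a hq ha3 ha4 g (j0 := p) (j1 := j1) hj hglt
          rw [hgs, hDg, smul_zero] at this
          exact this

lemma strictMono_of_no_descent (π : Equiv.Perm (Fin n))
    (h : ∀ j0 j1 : Fin n, (j0:ℕ) + 1 = (j1:ℕ) → π j0 < π j1) : StrictMono ⇑π := by
  have key : ∀ d : ℕ, ∀ p r : Fin n, (r:ℕ) = (p:ℕ) + d + 1 → π p < π r := by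
    intro d
    induction d with
    | zero => intro p r hr; exact h p r (by omega)
    | succ d ih =>
      intro p r hr
      have hlt : (p:ℕ) + d + 1 < n := by have := r.isLt; omega
      exact (ih p ⟨(p:ℕ) + d + 1, hlt⟩ rfl).trans (h ⟨(p:ℕ) + d + 1, hlt⟩ r (by simpa using hr.symm ▸ rfl))
  intro p r hpr
  rw [Fin.lt_def] at hpr
  exact key ((r:ℕ) - (p:ℕ) - 1) p r (by omega)

lemma descent_of_inv_ne_zero (π : Equiv.Perm (Fin n)) (h : inversionNumber π ≠ 0) :
    ∃ j0 j1 : Fin n, (j0:ℕ) + 1 = (j1:ℕ) ∧ π j1 < π j0 := by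
  by_contra hc
  push_neg at hc
  have hmono : StrictMono ⇑π := by
    apply strictMono_of_no_descent
    intro j0 j1 hj
    have hne : π j0 ≠ π j1 := fun he => by
      have : j0 = j1 := π.injective he
      rw [Fin.ext_iff] at this; omega
    exact lt_of_le_of_ne (hc j0 j1 hj) hne
  apply h
  rw [inversionNumber, Finset.card_eq_zero, Finset.filter_eq_empty_iff]
  rintro ⟨p, r⟩ _ ⟨h1, h2⟩
  exact absurd (hmono h1) (not_lt.2 h2.le)

lemma inv_zero_eq_one (π : Equiv.Perm (Fin n)) (h : inversionNumber π = 0) :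
    ⇑π = id := by
  have hmono : StrictMono ⇑π := by
    apply strictMono_of_no_descent
    intro j0 j1 hj
    have hj01 : j0 < j1 := by rw [Fin.lt_def]; omega
    have hne : π j0 ≠ π j1 := fun he => by
      have : j0 = j1 := π.injective he
      rw [Fin.ext_iff] at this; omega
    rcases lt_or_gt_of_ne hne with hlt | hgt
    · exact hlt
    · exfalso
      rw [inversionNumber, Finset.card_eq_zero, Finset.filter_eq_empty_iff] at h
      exact h (Finset.mem_univ (j0, j1)) ⟨hj01, hgt⟩
  have hw : WellFoundedLT (Fin n) := inferInstance
  have hr := @StrictMono.range_inj (Fin n) (Fin n) _ _ hw ⇑π id hmono strictMono_id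
  exact hr.mp (by rw [Equiv.range_eq_univ]; exact Set.range_id.symm)

lemma D_perm (hq : q ≠ 0)
    (ha3 : ∀ i j k l, i < j → k < l → a j k * a i l = a i l * a j k)
    (ha4 : ∀ i j k l, i < j → k < l →
      a i k * a j l - a j l * a i k = (q - q⁻¹) • (a i l * a j k)) :
    ∀ m : ℕ, ∀ π : Equiv.Perm (Fin n), inversionNumber π = m →
      D q a ⇑π = (-q) ^ inversionNumber π • D q a (fun k => k) := by
  intro m
  induction m with
  | zero =>
    intro π hπ
    rw [hπ, pow_zero, one_smul]
    congr 1
    exact inv_zero_eq_one π hπ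
  | succ m ih =>
    intro π hπ
    obtain ⟨j0, j1, hj, hdesc⟩ := descent_of_inv_ne_zero π (by omega)
    set s := Equiv.swap j0 j1 with hs
    set π' := π * s with hπ'
    have hπs : π' * s = π := by rw [hπ', mul_assoc, hs, Equiv.swap_mul_self, mul_one]
    have hp0 : π' j0 = π j1 := by rw [hπ']; simp [hs, Equiv.Perm.mul_apply]
    have hp1 : π' j1 = π j0 := by rw [hπ']; simp [hs, Equiv.Perm.mul_apply]
    have hlt : π' j0 < π' j1 := by rw [hp0, hp1]; exact hdesc
    have hinv : inversionNumber π = inversionNumber π' + 1 := by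
      rw [← hπs]
      exact inv_mul_swap π' hj hlt
    have hm : inversionNumber π' = m := by omega
    have hfun : ⇑π = ⇑π' ∘ ⇑s := by
      funext k
      rw [hπ']
      simp [hs, Equiv.Perm.mul_apply, Equiv.swap_apply_self]
    rw [hfun, D_swap_lt q a hq ha3 ha4 ⇑π' hj hlt, ih π' hm, hm, hπ,
      smul_smul, pow_succ, mul_comm]

end QDetAux

/-- for any row indices `i_1, …, i_n`, the sum
`Σ_{σ} (-q)^{ℓ(σ)} a_{i_1,σ(1)} ⋯ a_{i_n,σ(n)}` vanishes if two `i`'s coincide and equals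
`(-q)^{ℓ(π)} det_q(A)` if the `i`'s are distinct, with `π(k) = i_k`. -/
theorem quantum_determinant_row_permutation
    (F : Type*) [Field F] (q : F) (hq : q ≠ 0) (n : ℕ)
    (A : Type*) [Ring A] [Algebra F A]
    (a : Fin n → Fin n → A)
    (ha1 : ∀ i k l, k < l → a i k * a i l = q • (a i l * a i k))
    (ha2 : ∀ i j k, i < j → a i k * a j k = q • (a j k * a i k))
    (ha3 : ∀ i j k l, i < j → k < l → a j k * a i l = a i l * a j k)
    (ha4 : ∀ i j k l, i < j → k < l →
      a i k * a j l - a j l * a i k = (q - q⁻¹) • (a i l * a j k)) :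
    (∀ f : Fin n → Fin n, ¬ Function.Injective f →
      ∑ σ : Equiv.Perm (Fin n), (-q) ^ inversionNumber σ •
          ((List.finRange n).map (fun k => a (f k) (σ k))).prod = 0) ∧
    (∀ π : Equiv.Perm (Fin n),
      ∑ σ : Equiv.Perm (Fin n), (-q) ^ inversionNumber σ •
          ((List.finRange n).map (fun k => a (π k) (σ k))).prod
        = (-q) ^ inversionNumber π •
            ∑ σ : Equiv.Perm (Fin n), (-q) ^ inversionNumber σ •
              ((List.finRange n).map (fun k => a k (σ k))).prod) := by
  constructor
  · intro f hinj
    rw [Function.not_injective_iff] at hinj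
    obtain ⟨p, r, hf, hne⟩ := hinj
    show QDetAux.D q a f = 0
    rcases lt_or_gt_of_ne hne with hlt | hgt
    · exact QDetAux.D_eq_zero_of_eq q a hq ha1 ha3 ha4 ((r:ℕ) - p) f p r hlt hf le_rfl
    · exact QDetAux.D_eq_zero_of_eq q a hq ha1 ha3 ha4 ((p:ℕ) - r) f r p hgt hf.symm le_rfl
  · intro π
    show QDetAux.D q a ⇑π = (-q) ^ inversionNumber π • QDetAux.D q a (fun k => k)
    exact QDetAux.D_perm q a hq ha3 ha4 (inversionNumber π) π rfl
end

section
/- Laplace expansion for quantum determinants: fix row indices i_1 < ··· < i_r from {1,...,n} with complement i_{r+1} < ··· < i_n. Then det_q(A) = Σ (-q)^{(j_1+···+j_r)-(i_1+···+i_r)} ξ^{i_1···i_r}_{j_1···j_r} ξ^{i_{r+1}···i_n}_{j_{r+1}···j_n}, where the sum runs over all column subsets j_1<···<j_r with complement j_{r+1}<···<j_n. -/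
/-- The quantum minor `ξ^{g(1),…,g(r)}_{h(1),…,h(r)}`. -/
def qMinor {F : Type*} [Field F] (q : F) {A : Type*} [Ring A] [Algebra F A]
    {n r : ℕ} (a : Fin n → Fin n → A) (g h : Fin r → Fin n) : A :=
  ∑ σ : Equiv.Perm (Fin r), (-q) ^ inversionNumber σ •
    ((List.finRange r).map (fun i => a (g i) (h (σ i)))).prod

section QDetLaplace
open Finset Equiv

variable {n r : ℕ}

lemma swap_lt_swap {i j : Fin n} (hj : (j : ℕ) = (i : ℕ) + 1)
    {a b : Fin n} (hab : a < b) (hne : (a, b) ≠ (i, j)) :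
    Equiv.swap i j a < Equiv.swap i j b := by
  rw [Equiv.swap_apply_def, Equiv.swap_apply_def]
  split_ifs <;>
    simp only [Fin.lt_def, Fin.ext_iff, Prod.mk.injEq, not_and, ne_eq] at * <;> omega

lemma inversionNumber_mul_swap {i j : Fin n} (hj : (j : ℕ) = (i : ℕ) + 1)
    {τ : Equiv.Perm (Fin n)} (h : τ i < τ j) :
    inversionNumber (τ * Equiv.swap i j) = inversionNumber τ + 1 := by
  have hij : i < j := by rw [Fin.lt_def]; omega
  set s := Equiv.swap i j with hs
  have hss : ∀ x, s (s x) = x := fun x => Equiv.swap_apply_self i j x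
  set Aset := (Finset.univ : Finset (Fin n × Fin n)).filter
    (fun p => p.1 < p.2 ∧ (τ * s) p.2 < (τ * s) p.1) with hA
  set Bset := (Finset.univ : Finset (Fin n × Fin n)).filter
    (fun p => p.1 < p.2 ∧ τ p.2 < τ p.1) with hB
  have hijA : (i, j) ∈ Aset := by
    simp only [hA, mem_filter, mem_univ, true_and]
    refine ⟨hij, ?_⟩
    simpa [Equiv.Perm.mul_apply, hs, Equiv.swap_apply_left, Equiv.swap_apply_right] using h
  have hijB : (i, j) ∉ Bset := by
    simp only [hB, mem_filter, mem_univ, true_and]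
    rintro ⟨-, h2⟩; exact absurd h (not_lt.mpr h2.le)
  have key : (Aset.erase (i, j)).card = Bset.card := by
    apply Finset.card_nbij' (fun p => (s p.1, s p.2)) (fun p => (s p.1, s p.2))
    · intro p hp
      simp only [Finset.mem_coe, mem_erase, hA, mem_filter, mem_univ, true_and] at hp
      obtain ⟨hne, hlt, hinv⟩ := hp
      simp only [hB, Finset.mem_coe, mem_filter, mem_univ, true_and]
      exact ⟨swap_lt_swap hj hlt hne, by simpa [Equiv.Perm.mul_apply] using hinv⟩
    · intro p hp
      simp only [hB, Finset.mem_coe, mem_filter, mem_univ, true_and] at hp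
      obtain ⟨hlt, hinv⟩ := hp
      have hpne : p ≠ (i, j) := by
        rintro rfl
        exact absurd h (not_lt.mpr hinv.le)
      simp only [Finset.mem_coe, mem_erase, hA, mem_filter, mem_univ, true_and]
      refine ⟨?_, swap_lt_swap hj hlt hpne, by simpa [Equiv.Perm.mul_apply, hss] using hinv⟩
      intro hcon
      have h1 : s p.1 = i := congrArg Prod.fst hcon
      have h2 : s p.2 = j := congrArg Prod.snd hcon
      have : p.1 = s i := by rw [← h1, hss]
      have h2' : p.2 = s j := by rw [← h2, hss]
      rw [Equiv.swap_apply_left] at this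
      rw [Equiv.swap_apply_right] at h2'
      have := hlt
      rw [‹p.1 = j›, h2'] at this
      exact absurd hij (not_lt.mpr this.le)
    · intro p _; simp [hss]
    · intro p _; simp [hss]
  have : Aset.card = (Aset.erase (i,j)).card + 1 := by
    rw [Finset.card_erase_of_mem hijA]
    have : 0 < Aset.card := Finset.card_pos.mpr ⟨_, hijA⟩
    omega
  show Aset.card = Bset.card + 1
  omega

lemma inversionNumber_mul_swap_descent {i j : Fin n} (hj : (j : ℕ) = (i : ℕ) + 1)
    {τ : Equiv.Perm (Fin n)} (h : τ j < τ i) :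
    inversionNumber τ = inversionNumber (τ * Equiv.swap i j) + 1 := by
  have h2 : (τ * Equiv.swap i j) i < (τ * Equiv.swap i j) j := by
    simpa [Equiv.Perm.mul_apply, Equiv.swap_apply_left, Equiv.swap_apply_right] using h
  have := inversionNumber_mul_swap hj h2
  rwa [mul_assoc, Equiv.swap_mul_self, mul_one] at this

lemma exists_descent {τ : Equiv.Perm (Fin n)} (hτ : τ ≠ 1) :
    ∃ i j : Fin n, (j : ℕ) = (i : ℕ) + 1 ∧ τ j < τ i := by
  by_contra hc
  push_neg at hc
  have hmono : StrictMono τ := by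
    have hstep : ∀ k : ℕ, ∀ hk : k + 1 < n, τ ⟨k, by omega⟩ < τ ⟨k+1, hk⟩ := by
      intro k hk
      have := hc ⟨k, by omega⟩ ⟨k+1, hk⟩ rfl
      rcases lt_or_eq_of_le this with h | h
      · exact h
      · exact absurd (τ.injective h) (by simp [Fin.ext_iff])
    intro x y hxy
    rcases x with ⟨x, hx⟩; rcases y with ⟨y, hy⟩
    rw [Fin.lt_def] at hxy; simp only at hxy
    clear hc
    induction y with
    | zero => omega
    | succ m ih =>
      rcases Nat.lt_or_ge x m with hxm | hxm
      · exact (ih (by omega) (by omega)).trans (hstep m hy)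
      · have : x = m := by omega
        subst this
        exact hstep x hy
  have : τ = 1 := by
    have hfun : (τ : Fin n → Fin n) = id :=
      (StrictMono.range_inj hmono strictMono_id).mp (by rw [τ.surjective.range_eq, Set.range_id])
    ext x
    exact congrArg Fin.val (congrFun hfun x)
  exact hτ this

lemma inversionNumber_one (m : ℕ) : inversionNumber (1 : Equiv.Perm (Fin m)) = 0 := by
  unfold inversionNumber
  rw [Finset.card_eq_zero, Finset.filter_eq_empty_iff]
  rintro p -
  simp only [Equiv.Perm.one_apply]
  rintro ⟨h1, h2⟩
  exact absurd (h1.trans h2) (lt_irrefl _)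

lemma finRange_split (i j : Fin n) (hj : (j : ℕ) = (i : ℕ) + 1) :
    List.finRange n = (List.finRange n).take (i : ℕ)
      ++ i :: j :: (List.finRange n).drop ((i : ℕ) + 2) := by
  have hlen : (List.finRange n).length = n := List.length_finRange
  have hi : (i : ℕ) < n := i.isLt
  have hjn : (j : ℕ) < n := j.isLt
  conv_lhs => rw [← List.take_append_drop (i : ℕ) (List.finRange n)]
  congr 1
  rw [List.drop_eq_getElem_cons (by omega)]
  congr 1
  · simp [Fin.ext_iff]
  rw [List.drop_eq_getElem_cons (by omega)]
  congr 1
  · simp [Fin.ext_iff]; omega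

lemma prod_split {A : Type*} [Ring A] (f : Fin n → A) (i j : Fin n) (hj : (j : ℕ) = (i : ℕ) + 1) :
    ((List.finRange n).map f).prod =
      (((List.finRange n).take (i : ℕ)).map f).prod * (f i * f j) *
        (((List.finRange n).drop ((i : ℕ) + 2)).map f).prod := by
  conv_lhs => rw [finRange_split i j hj]
  simp [List.prod_append, mul_assoc]

lemma mem_take_val {p i : Fin n} (hp : p ∈ (List.finRange n).take (i : ℕ)) :
    (p : ℕ) < (i : ℕ) := by
  obtain ⟨k, hk, hpk⟩ := List.getElem_of_mem hp
  rw [List.getElem_take] at hpk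
  rw [List.length_take, List.length_finRange] at hk
  rw [← hpk]
  simp only [List.getElem_finRange]
  simp only [Fin.coe_cast]
  omega

lemma mem_drop_val {p i : Fin n} (hp : p ∈ (List.finRange n).drop ((i : ℕ) + 2)) :
    (i : ℕ) + 2 ≤ (p : ℕ) := by
  obtain ⟨k, hk, hpk⟩ := List.getElem_of_mem hp
  rw [List.getElem_drop] at hpk
  rw [← hpk]
  simp only [List.getElem_finRange, Fin.coe_cast]
  omega

/-- The core 2×2 commutation identity. -/
lemma core_identity {F : Type*} [Field F] {A : Type*} [Ring A] [Algebra F A] (q : F) (hq : q ≠ 0) (a : Fin n → Fin n → A)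
    (ha3 : ∀ i j k l, i < j → k < l → a j k * a i l = a i l * a j k)
    (ha4 : ∀ i j k l, i < j → k < l →
      a i k * a j l - a j l * a i k = (q - q⁻¹) • (a i l * a j k))
    {i' j' k l : Fin n} (hij : i' < j') (hkl : k < l) :
    a j' k * a i' l + (-q) • (a j' l * a i' k)
      = (-q) • (a i' k * a j' l) + (q * q) • (a i' l * a j' k) := by
  have h3 := ha3 i' j' k l hij hkl
  have h4 := ha4 i' j' k l hij hkl
  have h4' : a j' l * a i' k = a i' k * a j' l - (q - q⁻¹) • (a i' l * a j' k) := by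
    rw [← h4]; abel
  rw [h3, h4', smul_sub, smul_smul]
  have hqq : -q * (q - q⁻¹) = -(q*q) + 1 := by
    field_simp; ring
  rw [hqq]
  rw [add_smul, neg_smul, one_smul]
  module

/-- Pairing the sum over all permutations along an adjacent transposition. -/
lemma sum_pair {M : Type*} [AddCommMonoid M] (i j : Fin n) (hj : (j : ℕ) = (i : ℕ) + 1)
    (g : Equiv.Perm (Fin n) → M) :
    ∑ σ : Equiv.Perm (Fin n), g σ
      = ∑ σ ∈ Finset.univ.filter (fun σ : Equiv.Perm (Fin n) => σ i < σ j),
          (g σ + g (σ * Equiv.swap i j)) := by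
  have hij : i ≠ j := by intro h; rw [Fin.ext_iff] at h; omega
  rw [Finset.sum_add_distrib]
  rw [← Finset.sum_filter_add_sum_filter_not Finset.univ
    (fun σ : Equiv.Perm (Fin n) => σ i < σ j) g]
  congr 1
  apply Finset.sum_nbij' (fun σ => σ * Equiv.swap i j) (fun σ => σ * Equiv.swap i j)
  · intro σ hσ
    simp only [Finset.mem_filter, mem_univ, true_and, not_lt] at hσ ⊢
    have hne : σ j ≠ σ i := fun h => hij.symm (σ.injective h)
    have h2 : σ j < σ i := lt_of_le_of_ne hσ hne
    simpa [Equiv.Perm.mul_apply, Equiv.swap_apply_left, Equiv.swap_apply_right] using h2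
  · intro σ hσ
    simp only [Finset.mem_filter, mem_univ, true_and, not_lt] at hσ ⊢
    simpa [Equiv.Perm.mul_apply, Equiv.swap_apply_left, Equiv.swap_apply_right] using hσ.le
  · intro σ _; rw [mul_assoc, Equiv.swap_mul_self, mul_one]
  · intro σ _; rw [mul_assoc, Equiv.swap_mul_self, mul_one]
  · intro σ _; rw [mul_assoc, Equiv.swap_mul_self, mul_one]

lemma combine {F : Type*} [Field F] {A : Type*} [Ring A] [Algebra F A]
    (c q' : F) (P1 P2 m1 m2 m3 m4 : A)
    (h : m1 + q' • m2 = q' • m3 + (q' * q') • m4) :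
    c • (P1 * m1 * P2) + (c * q') • (P1 * m2 * P2)
      = q' • (c • (P1 * m3 * P2) + (c * q') • (P1 * m4 * P2)) := by
  calc c • (P1 * m1 * P2) + (c * q') • (P1 * m2 * P2)
      = c • (P1 * (m1 + q' • m2) * P2) := by
        rw [mul_add, add_mul, mul_smul_comm, smul_mul_assoc, smul_add, smul_smul]
    _ = c • (P1 * (q' • m3 + (q' * q') • m4) * P2) := by rw [h]
    _ = _ := by
        rw [mul_add, add_mul, mul_smul_comm, smul_mul_assoc, mul_smul_comm, smul_mul_assoc]
        rw [smul_add, smul_smul, smul_smul, smul_add, smul_smul, smul_smul]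
        congr 1 <;> congr 1 <;> ring

theorem lemA {F : Type*} [Field F] {A : Type*} [Ring A] [Algebra F A] {n : ℕ}
    (q : F) (hq : q ≠ 0) (a : Fin n → Fin n → A)
    (ha3 : ∀ i j k l, i < j → k < l → a j k * a i l = a i l * a j k)
    (ha4 : ∀ i j k l, i < j → k < l →
      a i k * a j l - a j l * a i k = (q - q⁻¹) • (a i l * a j k))
    (τ : Equiv.Perm (Fin n)) :
    ∑ σ : Equiv.Perm (Fin n), (-q) ^ inversionNumber σ •
        ((List.finRange n).map (fun p => a (τ p) (σ p))).prod
    = (-q) ^ inversionNumber τ •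
      ∑ σ : Equiv.Perm (Fin n), (-q) ^ inversionNumber σ •
        ((List.finRange n).map (fun p => a p (σ p))).prod := by
  generalize hN : inversionNumber τ = N
  induction N using Nat.strong_induction_on generalizing τ with
  | _ N ih =>
    rcases eq_or_ne τ 1 with rfl | hτ
    · have h1 : inversionNumber (1 : Equiv.Perm (Fin n)) = 0 := by
        unfold inversionNumber
        rw [Finset.card_eq_zero, Finset.filter_eq_empty_iff]
        rintro p -
        simp only [Equiv.Perm.one_apply]
        rintro ⟨h1, h2⟩
        exact absurd (h1.trans h2) (lt_irrefl _)
      simp only [h1, pow_zero, one_smul, Equiv.Perm.one_apply]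
      have hN0 : N = 0 := by omega
      rw [hN0, pow_zero, one_smul]
    · obtain ⟨i, j, hj, hd⟩ := exists_descent hτ
      have hdec : inversionNumber τ = inversionNumber (τ * Equiv.swap i j) + 1 :=
        inversionNumber_mul_swap_descent hj hd
      have ihτ' := ih (inversionNumber (τ * Equiv.swap i j)) (by omega)
        (τ * Equiv.swap i j) rfl
      have key : ∑ σ : Equiv.Perm (Fin n), (-q) ^ inversionNumber σ •
            ((List.finRange n).map (fun p => a (τ p) (σ p))).prod
          = (-q) • ∑ σ : Equiv.Perm (Fin n), (-q) ^ inversionNumber σ •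
            ((List.finRange n).map (fun p => a ((τ * Equiv.swap i j) p) (σ p))).prod := by
        rw [sum_pair i j hj, sum_pair i j hj
          (fun σ => (-q) ^ inversionNumber σ •
            ((List.finRange n).map (fun p => a ((τ * Equiv.swap i j) p) (σ p))).prod),
          Finset.smul_sum]
        refine Finset.sum_congr rfl fun σ hσ => ?_
        simp only [Finset.mem_filter, Finset.mem_univ, true_and] at hσ
        have hsσ : inversionNumber (σ * Equiv.swap i j) = inversionNumber σ + 1 :=
          inversionNumber_mul_swap hj hσ
        have hswap_ne : ∀ p : Fin n, (p : ℕ) < (i : ℕ) ∨ (i : ℕ) + 2 ≤ (p : ℕ) →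
            Equiv.swap i j p = p := by
          intro p hp
          exact Equiv.swap_apply_of_ne_of_ne (Fin.ne_of_val_ne (by omega))
            (Fin.ne_of_val_ne (by omega))
        simp only [Equiv.Perm.mul_apply, hsσ]
        rw [prod_split (fun p => a (τ p) (σ p)) i j hj,
          prod_split (fun p => a (τ p) (σ (Equiv.swap i j p))) i j hj,
          prod_split (fun p => a (τ (Equiv.swap i j p)) (σ p)) i j hj,
          prod_split (fun p => a (τ (Equiv.swap i j p)) (σ (Equiv.swap i j p))) i j hj]
        have ht2 : ((List.finRange n).take (i : ℕ)).map
              (fun p => a (τ p) (σ (Equiv.swap i j p)))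
            = ((List.finRange n).take (i : ℕ)).map (fun p => a (τ p) (σ p)) :=
          List.map_congr_left fun p hp => by rw [hswap_ne p (Or.inl (mem_take_val hp))]
        have ht3 : ((List.finRange n).take (i : ℕ)).map
              (fun p => a (τ (Equiv.swap i j p)) (σ p))
            = ((List.finRange n).take (i : ℕ)).map (fun p => a (τ p) (σ p)) :=
          List.map_congr_left fun p hp => by rw [hswap_ne p (Or.inl (mem_take_val hp))]
        have ht4 : ((List.finRange n).take (i : ℕ)).map
              (fun p => a (τ (Equiv.swap i j p)) (σ (Equiv.swap i j p)))
            = ((List.finRange n).take (i : ℕ)).map (fun p => a (τ p) (σ p)) :=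
          List.map_congr_left fun p hp => by rw [hswap_ne p (Or.inl (mem_take_val hp))]
        have hd2 : ((List.finRange n).drop ((i : ℕ) + 2)).map
              (fun p => a (τ p) (σ (Equiv.swap i j p)))
            = ((List.finRange n).drop ((i : ℕ) + 2)).map (fun p => a (τ p) (σ p)) :=
          List.map_congr_left fun p hp => by rw [hswap_ne p (Or.inr (mem_drop_val hp))]
        have hd3 : ((List.finRange n).drop ((i : ℕ) + 2)).map
              (fun p => a (τ (Equiv.swap i j p)) (σ p))
            = ((List.finRange n).drop ((i : ℕ) + 2)).map (fun p => a (τ p) (σ p)) :=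
          List.map_congr_left fun p hp => by rw [hswap_ne p (Or.inr (mem_drop_val hp))]
        have hd4 : ((List.finRange n).drop ((i : ℕ) + 2)).map
              (fun p => a (τ (Equiv.swap i j p)) (σ (Equiv.swap i j p)))
            = ((List.finRange n).drop ((i : ℕ) + 2)).map (fun p => a (τ p) (σ p)) :=
          List.map_congr_left fun p hp => by rw [hswap_ne p (Or.inr (mem_drop_val hp))]
        rw [ht2, ht3, ht4, hd2, hd3, hd4]
        simp only [Equiv.swap_apply_left, Equiv.swap_apply_right]
        rw [pow_succ]
        have hij' : τ j < τ i := hd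
        have hkl : σ i < σ j := hσ
        exact combine ((-q) ^ inversionNumber σ) (-q) _ _ _ _ _ _
          (by
            have := core_identity q hq a ha3 ha4 hij' hkl
            rw [neg_mul_neg]
            exact this)
      rw [key, ihτ', smul_smul, ← pow_succ', ← hdec, hN]
lemma card_filter_lt_fin (x : Fin n) :
    ((Finset.univ : Finset (Fin n)).filter (· < x)).card = (x : ℕ) := by
  have : (Finset.univ : Finset (Fin n)).filter (· < x) = Finset.Iio x := by
    ext y; simp
  rw [this, Fin.card_Iio]

/-- number of "crossing inversions" of a subset. -/
def invc (S : Finset (Fin n)) : ℕ :=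
  ((S ×ˢ Sᶜ).filter fun p => p.2 < p.1).card

lemma card_pairs {α β : Type*} [DecidableEq α] [DecidableEq β] (S : Finset α) (T : Finset β)
    (P : α → β → Prop) [∀ x y, Decidable (P x y)] :
    ((S ×ˢ T).filter fun p => P p.1 p.2).card = ∑ x ∈ S, (T.filter (P x)).card := by
  rw [Finset.card_eq_sum_card_fiberwise (f := Prod.fst) (t := S)
    (fun p hp => (Finset.mem_filter.mp hp).1 |> Finset.mem_product.mp |>.1)]
  refine Finset.sum_congr rfl fun x hx => ?_
  congr 1
  apply Finset.card_nbij (fun p => p.2) ?_ ?_ ?_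
  · rintro ⟨x', y⟩ hp
    simp only [Finset.mem_coe, Finset.mem_filter, Finset.mem_product] at hp ⊢
    obtain ⟨⟨⟨-, hy⟩, hP⟩, hfst⟩ := hp
    subst hfst
    exact ⟨hy, hP⟩
  · rintro ⟨x1, y1⟩ hp1 ⟨x2, y2⟩ hp2 h
    simp only [Finset.mem_coe, Finset.mem_filter] at hp1 hp2
    simp only at h
    simp [h, hp1.2, hp2.2]
  · intro y hy
    simp only [Finset.coe_filter, Set.mem_setOf_eq, Finset.mem_coe, Finset.mem_filter] at hy ⊢
    exact ⟨(x, y), by simp [Finset.mem_product, hy.1, hy.2, hx], rfl⟩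

lemma sum_filter_lt_self (S : Finset (Fin n)) {r : ℕ} (hS : S.card = r) :
    ∑ x ∈ S, (S.filter (· < x)).card = ∑ k ∈ Finset.range r, k := by
  classical
  have hterm : ∀ p : Fin r, (S.filter (· < S.orderEmbOfFin hS p)).card = (p : ℕ) := by
    intro p
    have hset : S.filter (· < S.orderEmbOfFin hS p)
        = Finset.image (S.orderEmbOfFin hS) (Finset.univ.filter (· < p)) := by
      ext y
      simp only [Finset.mem_filter, Finset.mem_image, Finset.mem_univ, true_and]
      constructor
      · rintro ⟨hyS, hylt⟩
        have : y ∈ Set.range (S.orderEmbOfFin hS) := by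
          rw [Finset.range_orderEmbOfFin]; exact hyS
        obtain ⟨q, rfl⟩ := this
        exact ⟨q, (S.orderEmbOfFin hS).lt_iff_lt.mp hylt, rfl⟩
      · rintro ⟨q, hq, rfl⟩
        exact ⟨Finset.orderEmbOfFin_mem S hS q, (S.orderEmbOfFin hS).lt_iff_lt.mpr hq⟩
    rw [hset, Finset.card_image_of_injective _ (S.orderEmbOfFin hS).injective,
      card_filter_lt_fin]
  symm
  rw [← Fin.sum_univ_eq_sum_range (fun k => k) r]
  refine Finset.sum_bij (fun (p : Fin r) _ => S.orderEmbOfFin hS p)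
    (fun p _ => Finset.orderEmbOfFin_mem S hS p)
    (fun p _ q _ h => (S.orderEmbOfFin hS).injective h) ?_ ?_
  · intro x hx
    have : x ∈ Set.range (S.orderEmbOfFin hS) := by
      rw [Finset.range_orderEmbOfFin]; exact hx
    obtain ⟨p, hp⟩ := this
    exact ⟨p, Finset.mem_univ p, hp⟩
  · intro p _
    exact (hterm p).symm

lemma sum_val_eq_invc (S : Finset (Fin n)) {r : ℕ} (hS : S.card = r) :
    ∑ x ∈ S, (x : ℕ) = invc S + ∑ k ∈ Finset.range r, k := by
  classical
  have hx : ∀ x : Fin n, x ∈ S → (x : ℕ)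
      = (S.filter (· < x)).card + (Sᶜ.filter (· < x)).card := by
    intro x _
    rw [← card_filter_lt_fin x]
    rw [← Finset.card_union_of_disjoint]
    · congr 1
      ext y
      simp only [Finset.mem_union, Finset.mem_filter, Finset.mem_compl]
      by_cases hy : y ∈ S <;> simp [hy] <;> tauto
    · exact Finset.disjoint_filter_filter disjoint_compl_right
  rw [Finset.sum_congr rfl hx, Finset.sum_add_distrib, sum_filter_lt_self S hS]
  have hcp := card_pairs S Sᶜ (fun a b => b < a)
  rw [invc, hcp, add_comm]

/-- glue a map on the first `r` and last `n-r` coordinates. -/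
def blockFun (hr : r ≤ n) (g : Fin r → Fin n) (g' : Fin (n - r) → Fin n) :
    Fin n → Fin n :=
  fun p => if h : (p : ℕ) < r then g ⟨p, h⟩
    else g' ⟨(p : ℕ) - r, by have := p.isLt; omega⟩

lemma blockFun_injective (hr : r ≤ n) {J : Finset (Fin n)}
    {g : Fin r → Fin n} {g' : Fin (n - r) → Fin n}
    (hg : Function.Injective g) (hg' : Function.Injective g')
    (hgJ : ∀ x, g x ∈ J) (hg'J : ∀ x, g' x ∈ Jᶜ) :
    Function.Injective (blockFun hr g g') := by
  intro p p' h
  unfold blockFun at h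
  split_ifs at h with h1 h2 h2
  · have := hg h; rw [Fin.ext_iff] at this ⊢; simpa using this
  · have hmem : g ⟨p, h1⟩ ∈ Jᶜ := h ▸ hg'J _
    exact absurd hmem (by simp [hgJ])
  · have hmem : g ⟨p', h2⟩ ∈ Jᶜ := h ▸ hg'J _
    exact absurd hmem (by simp [hgJ])
  · have := hg' h; rw [Fin.ext_iff] at this ⊢
    have hp := p.isLt; have hp' := p'.isLt
    simp only at this; omega

/-- the permutation built from a column set and two small permutations. -/
noncomputable def buildPerm (hr : r ≤ n) (J : Finset (Fin n)) (hJ : J.card = r)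
    (hJc : Jᶜ.card = n - r) (τ₁ : Equiv.Perm (Fin r)) (τ₂ : Equiv.Perm (Fin (n - r))) :
    Equiv.Perm (Fin n) :=
  Equiv.ofBijective (blockFun hr (fun x => J.orderEmbOfFin hJ (τ₁ x))
      (fun x => Jᶜ.orderEmbOfFin hJc (τ₂ x)))
    (Finite.injective_iff_bijective.mp
      (blockFun_injective hr
        (fun x y h => τ₁.injective ((J.orderEmbOfFin hJ).injective h))
        (fun x y h => τ₂.injective ((Jᶜ.orderEmbOfFin hJc).injective h))
        (fun x => Finset.orderEmbOfFin_mem J hJ (τ₁ x))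
        (fun x => Finset.orderEmbOfFin_mem Jᶜ hJc (τ₂ x))))

lemma buildPerm_apply_lt (hr : r ≤ n) (J : Finset (Fin n)) (hJ : J.card = r)
    (hJc : Jᶜ.card = n - r) (τ₁ : Equiv.Perm (Fin r)) (τ₂ : Equiv.Perm (Fin (n - r)))
    (p : Fin n) (h : (p : ℕ) < r) :
    buildPerm hr J hJ hJc τ₁ τ₂ p = J.orderEmbOfFin hJ (τ₁ ⟨p, h⟩) := by
  show blockFun hr (fun x => J.orderEmbOfFin hJ (τ₁ x))
    (fun x => Jᶜ.orderEmbOfFin hJc (τ₂ x)) p = _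
  unfold blockFun
  rw [dif_pos h]

lemma buildPerm_apply_ge (hr : r ≤ n) (J : Finset (Fin n)) (hJ : J.card = r)
    (hJc : Jᶜ.card = n - r) (τ₁ : Equiv.Perm (Fin r)) (τ₂ : Equiv.Perm (Fin (n - r)))
    (p : Fin n) (h : ¬ (p : ℕ) < r) :
    buildPerm hr J hJ hJc τ₁ τ₂ p
      = Jᶜ.orderEmbOfFin hJc (τ₂ ⟨(p : ℕ) - r, by have := p.isLt; omega⟩) := by
  show blockFun hr (fun x => J.orderEmbOfFin hJ (τ₁ x))
    (fun x => Jᶜ.orderEmbOfFin hJc (τ₂ x)) p = _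
  unfold blockFun
  rw [dif_neg h]

lemma inversionNumber_buildPerm (hr : r ≤ n) (J : Finset (Fin n)) (hJ : J.card = r)
    (hJc : Jᶜ.card = n - r) (τ₁ : Equiv.Perm (Fin r)) (τ₂ : Equiv.Perm (Fin (n - r))) :
    inversionNumber (buildPerm hr J hJ hJc τ₁ τ₂)
      = inversionNumber τ₁ + inversionNumber τ₂ + invc J := by
  classical
  set σ := buildPerm hr J hJ hJc τ₁ τ₂ with hσ
  set Inv := (Finset.univ : Finset (Fin n × Fin n)).filter
    (fun p => p.1 < p.2 ∧ σ p.2 < σ p.1) with hInv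
  have hsplit1 : Inv.card = (Inv.filter (fun p => (p.2 : ℕ) < r)).card
      + ((Inv.filter (fun p => ¬ (p.2 : ℕ) < r)).filter (fun p => r ≤ (p.1 : ℕ))).card
      + ((Inv.filter (fun p => ¬ (p.2 : ℕ) < r)).filter (fun p => ¬ r ≤ (p.1 : ℕ))).card := by
    have e1 := Finset.card_filter_add_card_filter_not
      (s := Inv) (p := fun p : Fin n × Fin n => (p.2 : ℕ) < r)
    have e2 := Finset.card_filter_add_card_filter_not
      (s := Inv.filter (fun p : Fin n × Fin n => ¬ (p.2 : ℕ) < r))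
      (p := fun p : Fin n × Fin n => r ≤ (p.1 : ℕ))
    beta_reduce at e1 e2
    omega
  have hc1 : (Inv.filter (fun p => (p.2 : ℕ) < r)).card = inversionNumber τ₁ := by
    have lt2 : ∀ p ∈ Inv.filter (fun p : Fin n × Fin n => (p.2 : ℕ) < r), (p.2 : ℕ) < r :=
      fun p hp => (Finset.mem_filter.mp hp).2
    have lt1 : ∀ p ∈ Inv.filter (fun p : Fin n × Fin n => (p.2 : ℕ) < r), (p.1 : ℕ) < r := by
      intro p hp
      have h12 : p.1 < p.2 := ((Finset.mem_filter.mp (Finset.mem_filter.mp hp).1).2).1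
      have := lt2 p hp
      rw [Fin.lt_def] at h12; omega
    apply Finset.card_bij
      (fun p hp => ((⟨p.1.1, lt1 p hp⟩ : Fin r), (⟨p.2.1, lt2 p hp⟩ : Fin r)))
    · intro p hp
      have hmem := Finset.mem_filter.mp (Finset.mem_filter.mp hp).1
      obtain ⟨h12, hinv⟩ := hmem.2
      simp only [inversionNumber, Finset.mem_filter, Finset.mem_univ, true_and]
      constructor
      · rw [Fin.lt_def] at h12 ⊢; exact h12
      · rw [hσ, buildPerm_apply_lt hr J hJ hJc τ₁ τ₂ p.2 (lt2 p hp),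
          buildPerm_apply_lt hr J hJ hJc τ₁ τ₂ p.1 (lt1 p hp)] at hinv
        exact (OrderEmbedding.lt_iff_lt _).mp hinv
    · intro p hp p' hp' h
      simp only [Prod.mk.injEq, Fin.mk.injEq] at h
      exact Prod.ext (Fin.ext h.1) (Fin.ext h.2)
    · intro x hx
      simp only [inversionNumber, Finset.mem_filter, Finset.mem_univ, true_and] at hx
      obtain ⟨h12, hinv⟩ := hx
      refine ⟨(⟨x.1.1, x.1.isLt.trans_le hr⟩, ⟨x.2.1, x.2.isLt.trans_le hr⟩), ?_, ?_⟩
      · simp only [Finset.mem_filter, hInv, Finset.mem_univ, true_and]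
        refine ⟨⟨by rw [Fin.lt_def] at h12 ⊢; exact h12, ?_⟩, x.2.isLt⟩
        rw [hσ, buildPerm_apply_lt hr J hJ hJc τ₁ τ₂ _ (x.2.isLt),
          buildPerm_apply_lt hr J hJ hJc τ₁ τ₂ _ (x.1.isLt)]
        simp only [Fin.eta]
        exact (OrderEmbedding.lt_iff_lt _).mpr hinv
      · simp [Fin.ext_iff]
  have hc2 : ((Inv.filter (fun p => ¬ (p.2 : ℕ) < r)).filter
      (fun p => r ≤ (p.1 : ℕ))).card = inversionNumber τ₂ := by
    have ge1 : ∀ p ∈ (Inv.filter (fun p : Fin n × Fin n => ¬ (p.2 : ℕ) < r)).filter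
        (fun p => r ≤ (p.1 : ℕ)), ¬ (p.1 : ℕ) < r := fun p hp => by
      have := (Finset.mem_filter.mp hp).2; omega
    have ge2 : ∀ p ∈ (Inv.filter (fun p : Fin n × Fin n => ¬ (p.2 : ℕ) < r)).filter
        (fun p => r ≤ (p.1 : ℕ)), ¬ (p.2 : ℕ) < r := fun p hp =>
      (Finset.mem_filter.mp (Finset.mem_filter.mp hp).1).2
    apply Finset.card_bij (fun p hp =>
      ((⟨p.1.1 - r, by
          have h1 := (Finset.mem_filter.mp hp).2
          have := p.1.isLt; omega⟩ : Fin (n - r)),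
       (⟨p.2.1 - r, by
          have h2 := (Finset.mem_filter.mp (Finset.mem_filter.mp hp).1).2
          have := p.2.isLt; omega⟩ : Fin (n - r))))
    · intro p hp
      have hmem := Finset.mem_filter.mp (Finset.mem_filter.mp (Finset.mem_filter.mp hp).1).1
      obtain ⟨h12, hinv⟩ := hmem.2
      have hg1 := ge1 p hp; have hg2 := ge2 p hp
      simp only [inversionNumber, Finset.mem_filter, Finset.mem_univ, true_and]
      constructor
      · rw [Fin.lt_def] at h12 ⊢; simp only; omega
      · rw [hσ, buildPerm_apply_ge hr J hJ hJc τ₁ τ₂ p.2 hg2,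
          buildPerm_apply_ge hr J hJ hJc τ₁ τ₂ p.1 hg1] at hinv
        exact (OrderEmbedding.lt_iff_lt _).mp hinv
    · intro p hp p' hp' h
      have hg1 := ge1 p hp; have hg2 := ge2 p hp
      have hg1' := ge1 p' hp'; have hg2' := ge2 p' hp'
      simp only [Prod.mk.injEq, Fin.mk.injEq] at h
      refine Prod.ext (Fin.ext ?_) (Fin.ext ?_) <;> omega
    · intro x hx
      simp only [inversionNumber, Finset.mem_filter, Finset.mem_univ, true_and] at hx
      obtain ⟨h12, hinv⟩ := hx
      have hb1 : (x.1.1 + r) < n := by have := x.1.isLt; omega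
      have hb2 : (x.2.1 + r) < n := by have := x.2.isLt; omega
      refine ⟨(⟨x.1.1 + r, hb1⟩, ⟨x.2.1 + r, hb2⟩), ?_, ?_⟩
      · simp only [Finset.mem_filter, hInv, Finset.mem_univ, true_and]
        refine ⟨⟨⟨by rw [Fin.lt_def] at h12 ⊢; simp only; omega, ?_⟩, by simp⟩, by simp⟩
        rw [hσ, buildPerm_apply_ge hr J hJ hJc τ₁ τ₂ _ (by simp),
          buildPerm_apply_ge hr J hJ hJc τ₁ τ₂ _ (by simp)]
        have e1 : (⟨(⟨x.1.1 + r, hb1⟩ : Fin n).1 - r, by have := hb1; omega⟩ : Fin (n - r))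
            = x.1 := by simp [Fin.ext_iff]
        have e2 : (⟨(⟨x.2.1 + r, hb2⟩ : Fin n).1 - r, by have := hb2; omega⟩ : Fin (n - r))
            = x.2 := by simp [Fin.ext_iff]
        rw [e1, e2]
        exact (OrderEmbedding.lt_iff_lt _).mpr hinv
      · simp [Fin.ext_iff]
  have hc3 : ((Inv.filter (fun p => ¬ (p.2 : ℕ) < r)).filter
      (fun p => ¬ r ≤ (p.1 : ℕ))).card = invc J := by
    have lt1 : ∀ p ∈ (Inv.filter (fun p : Fin n × Fin n => ¬ (p.2 : ℕ) < r)).filter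
        (fun p => ¬ r ≤ (p.1 : ℕ)), (p.1 : ℕ) < r := fun p hp => by
      have := (Finset.mem_filter.mp hp).2; omega
    have ge2 : ∀ p ∈ (Inv.filter (fun p : Fin n × Fin n => ¬ (p.2 : ℕ) < r)).filter
        (fun p => ¬ r ≤ (p.1 : ℕ)), ¬ (p.2 : ℕ) < r := fun p hp =>
      (Finset.mem_filter.mp (Finset.mem_filter.mp hp).1).2
    apply Finset.card_bij (fun p _ => (σ p.1, σ p.2))
    · intro p hp
      have hmem := Finset.mem_filter.mp (Finset.mem_filter.mp (Finset.mem_filter.mp hp).1).1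
      obtain ⟨h12, hinv⟩ := hmem.2
      simp only [invc, Finset.mem_filter, Finset.mem_product]
      refine ⟨⟨?_, ?_⟩, hinv⟩
      · rw [hσ, buildPerm_apply_lt hr J hJ hJc τ₁ τ₂ p.1 (lt1 p hp)]
        exact Finset.orderEmbOfFin_mem J hJ _
      · rw [hσ, buildPerm_apply_ge hr J hJ hJc τ₁ τ₂ p.2 (ge2 p hp)]
        exact Finset.orderEmbOfFin_mem Jᶜ hJc _
    · intro p hp p' hp' h
      simp only [Prod.mk.injEq] at h
      exact Prod.ext (σ.injective h.1) (σ.injective h.2)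
    · intro y hy
      simp only [invc, Finset.mem_filter, Finset.mem_product] at hy
      obtain ⟨⟨hy1, hy2⟩, hlt⟩ := hy
      have h1 : y.1 ∈ Set.range (J.orderEmbOfFin hJ) := by
        rw [Finset.range_orderEmbOfFin]; exact hy1
      have h2 : y.2 ∈ Set.range (Jᶜ.orderEmbOfFin hJc) := by
        rw [Finset.range_orderEmbOfFin]; exact hy2
      obtain ⟨z1, hz1⟩ := h1
      obtain ⟨z2, hz2⟩ := h2
      set w1 := τ₁⁻¹ z1 with hw1
      set w2 := τ₂⁻¹ z2 with hw2
      have hbw1 : (w1 : ℕ) < n := w1.isLt.trans_le hr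
      have hbw2 : (w2 : ℕ) + r < n := by have := w2.isLt; omega
      have hσ1 : σ ⟨w1.1, hbw1⟩ = y.1 := by
        rw [hσ, buildPerm_apply_lt hr J hJ hJc τ₁ τ₂ _ w1.isLt]
        simp only [Fin.eta, hw1, Equiv.Perm.inv_def, Equiv.apply_symm_apply]
        exact hz1
      have hσ2 : σ ⟨w2.1 + r, hbw2⟩ = y.2 := by
        rw [hσ, buildPerm_apply_ge hr J hJ hJc τ₁ τ₂ _ (by simp)]
        have e2 : (⟨(⟨w2.1 + r, hbw2⟩ : Fin n).1 - r, by omega⟩ : Fin (n - r)) = w2 := by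
          simp [Fin.ext_iff]
        rw [e2, hw2]
        simp only [Equiv.Perm.inv_def, Equiv.apply_symm_apply]
        exact hz2
      refine ⟨(⟨w1.1, hbw1⟩, ⟨w2.1 + r, hbw2⟩), ?_, ?_⟩
      · simp only [Finset.mem_filter, hInv, Finset.mem_univ, true_and]
        refine ⟨⟨⟨?_, ?_⟩, by simp⟩, by simp [w1.isLt]⟩
        · rw [Fin.lt_def]; simp only; have := w1.isLt; omega
        · rw [hσ1, hσ2]; exact hlt
      · simp [hσ1, hσ2]
  rw [show inversionNumber σ = Inv.card from rfl, hsplit1, hc1, hc2, hc3]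

lemma prod_block {A : Type*} [Ring A] {n r : ℕ} (hr : r ≤ n) (f : Fin n → A)
    (f₁ : Fin r → A) (f₂ : Fin (n - r) → A)
    (h1 : ∀ (k : ℕ) (hk : k < r) (hkn : k < n), f ⟨k, hkn⟩ = f₁ ⟨k, hk⟩)
    (h2 : ∀ (k : ℕ) (hk : k < n - r) (hkn : r + k < n), f ⟨r + k, hkn⟩ = f₂ ⟨k, hk⟩) :
    ((List.finRange n).map f).prod
      = ((List.finRange r).map f₁).prod * ((List.finRange (n - r)).map f₂).prod := by
  conv_lhs => rw [← List.take_append_drop r (List.finRange n)]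
  rw [List.map_append, List.prod_append]
  congr 1
  · have heq : ((List.finRange n).take r).map f = (List.finRange r).map f₁ := by
      apply List.ext_getElem
      · simp [List.length_take, Nat.min_eq_left hr]
      · intro k hk1 hk2
        simp only [List.getElem_map, List.getElem_take, List.getElem_finRange]
        rw [List.length_map, List.length_take, List.length_finRange] at hk1
        rw [List.length_map, List.length_finRange] at hk2
        exact h1 k hk2 (by omega)
    rw [heq]
  · have heq : ((List.finRange n).drop r).map f = (List.finRange (n - r)).map f₂ := by
      apply List.ext_getElem
      · simp [List.length_drop]
      · intro k hk1 hk2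
        simp only [List.getElem_map, List.getElem_drop, List.getElem_finRange]
        rw [List.length_map, List.length_drop, List.length_finRange] at hk1
        rw [List.length_map, List.length_finRange] at hk2
        exact h2 k hk2 (by omega)
    rw [heq]

/-- every element of `J` is a value of `buildPerm` at a position `< r`. -/
lemma buildPerm_mem_iff (hr : r ≤ n) (J : Finset (Fin n)) (hJ : J.card = r)
    (hJc : Jᶜ.card = n - r) (τ₁ : Equiv.Perm (Fin r)) (τ₂ : Equiv.Perm (Fin (n - r)))
    (y : Fin n) :
    y ∈ J ↔ ∃ p : Fin n, (p : ℕ) < r ∧ buildPerm hr J hJ hJc τ₁ τ₂ p = y := by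
  constructor
  · intro hy
    have : y ∈ Set.range (J.orderEmbOfFin hJ) := by
      rw [Finset.range_orderEmbOfFin]; exact hy
    obtain ⟨z, hz⟩ := this
    set w := τ₁⁻¹ z with hw
    refine ⟨⟨w.1, w.isLt.trans_le hr⟩, w.isLt, ?_⟩
    rw [buildPerm_apply_lt hr J hJ hJc τ₁ τ₂ _ w.isLt]
    simp only [Fin.eta, hw, Equiv.Perm.inv_def, Equiv.apply_symm_apply]
    exact hz
  · rintro ⟨p, hp, rfl⟩
    rw [buildPerm_apply_lt hr J hJ hJc τ₁ τ₂ _ hp]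
    exact Finset.orderEmbOfFin_mem J hJ _

/-- the Laplace expansion of the quantum determinant along a fixed set `I`
of `r` rows: `det_q(A) = Σ_J (-q)^{Σ J - Σ I} ξ^{I}_{J} ξ^{Iᶜ}_{Jᶜ}`, the sum running over
all `r`-element column sets `J`. -/
theorem quantum_determinant_laplace_expansion
    (F : Type*) [Field F] (q : F) (hq : q ≠ 0) (n r : ℕ) (hr : r ≤ n)
    (A : Type*) [Ring A] [Algebra F A]
    (a : Fin n → Fin n → A)
    (ha1 : ∀ i k l, k < l → a i k * a i l = q • (a i l * a i k))
    (ha2 : ∀ i j k, i < j → a i k * a j k = q • (a j k * a i k))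
    (ha3 : ∀ i j k l, i < j → k < l → a j k * a i l = a i l * a j k)
    (ha4 : ∀ i j k l, i < j → k < l →
      a i k * a j l - a j l * a i k = (q - q⁻¹) • (a i l * a j k))
    (I : Finset (Fin n)) (hI : I.card = r) (hIc : Iᶜ.card = n - r) :
    ∑ σ : Equiv.Perm (Fin n), (-q) ^ inversionNumber σ •
        ((List.finRange n).map (fun i => a i (σ i))).prod
      = ∑ J ∈ (Finset.powersetCard r (Finset.univ : Finset (Fin n))).attach,
          (-q) ^ ((∑ j ∈ J.1, (j : ℤ)) - ∑ i ∈ I, (i : ℤ)) •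
            (qMinor q a (I.orderEmbOfFin hI) (J.1.orderEmbOfFin
                (Finset.mem_powersetCard.mp J.2).2) *
             qMinor q a (Iᶜ.orderEmbOfFin hIc) ((J.1ᶜ).orderEmbOfFin
                (by simp [Finset.card_compl, (Finset.mem_powersetCard.mp J.2).2]))) := by
  classical
  have hu : (-q : F) ≠ 0 := neg_ne_zero.mpr hq
  set τ₀ := buildPerm hr I hI hIc 1 1 with hτ₀
  have hℓτ₀ : inversionNumber τ₀ = invc I := by
    rw [hτ₀, inversionNumber_buildPerm, inversionNumber_one, inversionNumber_one]
    omega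
  -- the determinant
  set D := ∑ σ : Equiv.Perm (Fin n), (-q) ^ inversionNumber σ •
      ((List.finRange n).map (fun i => a i (σ i))).prod with hD
  have hA := lemA q hq a ha3 ha4 τ₀
  rw [hℓτ₀] at hA
  -- index set for the triple sum
  set s := (Finset.powersetCard r (Finset.univ : Finset (Fin n))).attach ×ˢ
    (Finset.univ : Finset (Equiv.Perm (Fin r) × Equiv.Perm (Fin (n - r)))) with hs
  have cardJ : ∀ J : {x // x ∈ Finset.powersetCard r (Finset.univ : Finset (Fin n))},
      J.1.card = r := fun J => (Finset.mem_powersetCard.mp J.2).2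
  have cardJc : ∀ J : {x // x ∈ Finset.powersetCard r (Finset.univ : Finset (Fin n))},
      J.1ᶜ.card = n - r := fun J => by
    simp [Finset.card_compl, (Finset.mem_powersetCard.mp J.2).2]
  -- Lemma B : the triple-sum expansion of the row-permuted determinant
  have hB : ∑ σ : Equiv.Perm (Fin n), (-q) ^ inversionNumber σ •
        ((List.finRange n).map (fun p => a (τ₀ p) (σ p))).prod
      = ∑ x ∈ s, (-q) ^ (inversionNumber x.2.1 + inversionNumber x.2.2 + invc x.1.1) •
          (((List.finRange r).map (fun p => a (I.orderEmbOfFin hI p)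
              (x.1.1.orderEmbOfFin (cardJ x.1) (x.2.1 p)))).prod *
           ((List.finRange (n - r)).map (fun p => a (Iᶜ.orderEmbOfFin hIc p)
              ((x.1.1ᶜ).orderEmbOfFin (cardJc x.1) (x.2.2 p)))).prod) := by
    symm
    apply Finset.sum_bij (fun x _ => buildPerm hr x.1.1 (cardJ x.1) (cardJc x.1) x.2.1 x.2.2)
      (fun x _ => Finset.mem_univ _)
    · -- injectivity
      rintro ⟨⟨J, hJmem⟩, τ₁, τ₂⟩ hx ⟨⟨J', hJ'mem⟩, τ₁', τ₂'⟩ hx' h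
      simp only at h
      have hJJ' : J = J' := by
        ext y
        rw [buildPerm_mem_iff hr J (cardJ ⟨J, hJmem⟩) (cardJc ⟨J, hJmem⟩) τ₁ τ₂ y,
            buildPerm_mem_iff hr J' (cardJ ⟨J', hJ'mem⟩) (cardJc ⟨J', hJ'mem⟩) τ₁' τ₂' y, h]
      subst hJJ'
      have hτ1 : τ₁ = τ₁' := by
        ext z
        have hz := congrArg (fun ρ : Equiv.Perm (Fin n) => ρ ⟨z.1, z.isLt.trans_le hr⟩) h
        rw [buildPerm_apply_lt hr J _ _ τ₁ τ₂ _ z.isLt,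
          buildPerm_apply_lt hr J _ _ τ₁' τ₂' _ z.isLt] at hz
        have := (J.orderEmbOfFin _).injective hz
        simp only [Fin.eta] at this
        rw [this]
      have hτ2 : τ₂ = τ₂' := by
        ext z
        have hb : (z : ℕ) + r < n := by have := z.isLt; omega
        have hz := congrArg (fun ρ : Equiv.Perm (Fin n) => ρ ⟨z.1 + r, hb⟩) h
        rw [buildPerm_apply_ge hr J _ _ τ₁ τ₂ _ (by simp),
          buildPerm_apply_ge hr J _ _ τ₁' τ₂' _ (by simp)] at hz
        have := (Jᶜ.orderEmbOfFin _).injective hz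
        have he : (⟨(⟨z.1 + r, hb⟩ : Fin n).1 - r, by omega⟩ : Fin (n - r)) = z := by
          simp [Fin.ext_iff]
        rw [he] at this
        rw [this]
      rw [hτ1, hτ2]
    · -- surjectivity
      intro σ _
      have hcard : (Finset.univ : Finset (Equiv.Perm (Fin n))).card ≤ s.card := by
        rw [hs, Finset.card_product, Finset.card_attach, Finset.card_powersetCard]
        simp only [Finset.card_univ, Fintype.card_prod, Fintype.card_perm, Fintype.card_fin]
        rw [← Nat.choose_mul_factorial_mul_factorial hr]
        exact le_of_eq (by ring)
      have hsurj := Finset.surj_on_of_inj_on_of_card_le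
        (fun (x : _ × _) (_ : x ∈ s) => buildPerm hr x.1.1 (cardJ x.1) (cardJc x.1) x.2.1 x.2.2)
        (fun x _ => Finset.mem_univ _)
        ?_ hcard σ (Finset.mem_univ σ)
      · obtain ⟨x, hxs, hxe⟩ := hsurj
        exact ⟨x, hxs, hxe.symm⟩
      · rintro ⟨⟨J, hJmem⟩, τ₁, τ₂⟩ ⟨⟨J', hJ'mem⟩, τ₁', τ₂'⟩ hx hx' h
        simp only at h
        have hJJ' : J = J' := by
          ext y
          rw [buildPerm_mem_iff hr J (cardJ ⟨J, hJmem⟩) (cardJc ⟨J, hJmem⟩) τ₁ τ₂ y,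
            buildPerm_mem_iff hr J' (cardJ ⟨J', hJ'mem⟩) (cardJc ⟨J', hJ'mem⟩) τ₁' τ₂' y, h]
        subst hJJ'
        have hτ1 : τ₁ = τ₁' := by
          ext z
          have hz := congrArg (fun ρ : Equiv.Perm (Fin n) => ρ ⟨z.1, z.isLt.trans_le hr⟩) h
          rw [buildPerm_apply_lt hr J _ _ τ₁ τ₂ _ z.isLt,
            buildPerm_apply_lt hr J _ _ τ₁' τ₂' _ z.isLt] at hz
          have := (J.orderEmbOfFin _).injective hz
          simp only [Fin.eta] at this
          rw [this]
        have hτ2 : τ₂ = τ₂' := by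
          ext z
          have hb : (z : ℕ) + r < n := by have := z.isLt; omega
          have hz := congrArg (fun ρ : Equiv.Perm (Fin n) => ρ ⟨z.1 + r, hb⟩) h
          rw [buildPerm_apply_ge hr J _ _ τ₁ τ₂ _ (by simp),
            buildPerm_apply_ge hr J _ _ τ₁' τ₂' _ (by simp)] at hz
          have := (Jᶜ.orderEmbOfFin _).injective hz
          have he : (⟨(⟨z.1 + r, hb⟩ : Fin n).1 - r, by omega⟩ : Fin (n - r)) = z := by
            simp [Fin.ext_iff]
          rw [he] at this
          rw [this]
        rw [hτ1, hτ2]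
    · -- value equality
      rintro ⟨⟨J, hJmem⟩, τ₁, τ₂⟩ hx
      have hJr : J.card = r := (Finset.mem_powersetCard.mp hJmem).2
      have hJcr : Jᶜ.card = n - r := by simp [Finset.card_compl, hJr]
      congr 1
      · rw [inversionNumber_buildPerm]
      · symm
        apply prod_block hr
        · intro k hk hkn
          rw [buildPerm_apply_lt hr J _ _ τ₁ τ₂ _ hk,
            buildPerm_apply_lt hr I hI hIc 1 1 _ hk]
          rfl
        · intro k hk hkn
          rw [buildPerm_apply_ge hr J _ _ τ₁ τ₂ _ (by simp),
            buildPerm_apply_ge hr I hI hIc 1 1 _ (by simp)]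
          have he : (⟨(⟨r + k, hkn⟩ : Fin n).1 - r, by omega⟩ : Fin (n - r))
              = ⟨k, hk⟩ := by simp [Fin.ext_iff]
          rw [he]
          rfl
  -- now assemble
  have hD' : D = (-q) ^ (-(invc I : ℤ)) • ∑ σ : Equiv.Perm (Fin n),
      (-q) ^ inversionNumber σ •
        ((List.finRange n).map (fun p => a (τ₀ p) (σ p))).prod := by
    rw [hA, smul_smul, ← zpow_natCast (-q) (invc I), ← zpow_add₀ hu]
    norm_num
    exact hD
  rw [hD', hB, Finset.smul_sum]
  rw [hs, Finset.sum_product]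
  simp only [qMinor]
  apply Finset.sum_congr rfl
  intro J hJmem
  rw [Finset.sum_mul_sum, Fintype.sum_prod_type, Finset.smul_sum]
  apply Finset.sum_congr rfl
  intro τ₁ _
  rw [Finset.smul_sum]
  apply Finset.sum_congr rfl
  intro τ₂ _
  rw [smul_mul_smul_comm, smul_smul, smul_smul]
  have hJr : J.1.card = r := cardJ J
  have hsc : (-q) ^ (-(invc I : ℤ)) * (-q) ^ (inversionNumber τ₁ + inversionNumber τ₂ + invc J.1)
      = (-q) ^ ((∑ j ∈ J.1, (j : ℤ)) - ∑ i ∈ I, (i : ℤ))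
        * ((-q) ^ inversionNumber τ₁ * (-q) ^ inversionNumber τ₂) := by
    rw [← zpow_natCast (-q) (inversionNumber τ₁ + inversionNumber τ₂ + invc J.1),
      ← zpow_natCast (-q) (inversionNumber τ₁), ← zpow_natCast (-q) (inversionNumber τ₂),
      ← zpow_add₀ hu, ← zpow_add₀ hu, ← zpow_add₀ hu]
    congr 1
    have h1 := sum_val_eq_invc J.1 hJr
    have h2 := sum_val_eq_invc I hI
    have hJz : (∑ j ∈ J.1, (j : ℤ)) = ((∑ j ∈ J.1, (j : ℕ) : ℕ) : ℤ) := by push_cast; rfl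
    have hIz : (∑ i ∈ I, (i : ℤ)) = ((∑ i ∈ I, (i : ℕ) : ℕ) : ℤ) := by push_cast; rfl
    rw [hJz, hIz]
    omega
  rw [hsc]

end QDetLaplace
end

section
/- Explicit formula for the quantum Pfaffian: [1,2,...,2n] = Σ_{π∈Π} (-q)^{ℓ(π)} b_{i_1 j_1} b_{i_2 j_2} ··· b_{i_n j_n}, where Π is the set of perfect matchings π = {(i_1,j_1),...,(i_n,j_n)} of {1,...,2n} with i_k < j_k and i_1 < i_2 < ··· < i_n, and ℓ(π) is the inversion number of the permutation (i_1 j_1 i_2 j_2 ··· i_n j_n). -/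
set_option maxHeartbeats 1000000


/-- Auxiliary recursion for the quantum Pfaffian: `k` steps of the inductive expansion
`[S] = Σ_{j ∈ S, j ≠ min S} (-q)^{rank_S(j) - 2} b_{min S, j} [S \ {min S, j}]`. -/
def qPfAux {F : Type*} [Field F] {A : Type*} [Ring A] [Algebra F A] {N : ℕ}
    (q : F) (b : Fin N → Fin N → A) : ℕ → Finset (Fin N) → A
  | 0, _ => 1
  | k + 1, s =>
    if h : s.Nonempty then
      ∑ j ∈ s.erase (s.min' h),
        (-q) ^ ((s.filter (· < j)).card - 1) •
          (b (s.min' h) j * qPfAux q b k ((s.erase (s.min' h)).erase j))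
    else 0

/-- The quantum Pfaffian `[S]` of an index set `S`, defined by the inductive expansion
along the smallest index (for `S = {1,…,2n}` this is
`[1,…,2n] = Σ_{j=2}^{2n} (-q)^{j-2} [1,j][2,…,ĵ,…,2n]`). -/
def qPf {F : Type*} [Field F] {A : Type*} [Ring A] [Algebra F A] {N : ℕ}
    (q : F) (b : Fin N → Fin N → A) (s : Finset (Fin N)) : A :=
  qPfAux q b (s.card / 2) s


section Aux

variable {N : ℕ}

/-- inversion number of a function on `Fin m`. -/
def finv {m : ℕ} (f : Fin m → Fin N) : ℕ :=
  ((Finset.univ : Finset (Fin m × Fin m)).filter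
    (fun p => p.1 < p.2 ∧ f p.2 < f p.1)).card

/-- the set of enumerated perfect matchings of `s` by `2k` indices. -/
def mset (N k : ℕ) (s : Finset (Fin N)) : Finset (Fin (2 * k) → Fin N) :=
  Finset.univ.filter (fun f => Function.Injective f ∧ (∀ x, f x ∈ s) ∧
    (∀ i : Fin k, f ⟨2 * i, by omega⟩ < f ⟨2 * i + 1, by omega⟩) ∧
    (∀ i l : Fin k, i < l → f ⟨2 * i, by omega⟩ < f ⟨2 * l, by omega⟩))

lemma mem_mset_iff {k : ℕ} {s : Finset (Fin N)} {f : Fin (2 * k) → Fin N} :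
    f ∈ mset N k s ↔ Function.Injective f ∧ (∀ x, f x ∈ s) ∧
    (∀ i : Fin k, f ⟨2 * i, by omega⟩ < f ⟨2 * i + 1, by omega⟩) ∧
    (∀ i l : Fin k, i < l → f ⟨2 * i, by omega⟩ < f ⟨2 * l, by omega⟩) := by
  simp [mset]

lemma mset_surj {k : ℕ} {s : Finset (Fin N)} (hs : s.card = 2 * k)
    {f : Fin (2 * k) → Fin N} (hf : f ∈ mset N k s) : ∀ y ∈ s, ∃ x, f x = y := by
  obtain ⟨hinj, hmem, -, -⟩ := mem_mset_iff.mp hf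
  have himg : Finset.image f Finset.univ = s := by
    apply Finset.eq_of_subset_of_card_le
    · intro y hy
      obtain ⟨x, -, rfl⟩ := Finset.mem_image.mp hy
      exact hmem x
    · rw [Finset.card_image_of_injective _ hinj, Finset.card_univ, Fintype.card_fin, hs]
  intro y hy
  obtain ⟨x, -, hx⟩ := Finset.mem_image.mp (himg ▸ hy)
  exact ⟨x, hx⟩

variable {F : Type*} [Field F] {A : Type*} [Ring A] [Algebra F A]

/-- the product of `b` values along a matching enumeration. -/
def mprod (b : Fin N → Fin N → A) (k : ℕ) (f : Fin (2 * k) → Fin N) : A :=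
  ((List.finRange k).map (fun i : Fin k =>
    b (f ⟨2 * i, by omega⟩) (f ⟨2 * i + 1, by omega⟩))).prod

end Aux

section Aux
variable {N : ℕ}

def qext {k : ℕ} (m j : Fin N) (f : Fin (2 * k) → Fin N) : Fin (2 * (k + 1)) → Fin N :=
  fun x => if h0 : (x : ℕ) = 0 then m else if h1 : (x : ℕ) = 1 then j
    else f ⟨(x : ℕ) - 2, by have := x.isLt; omega⟩

lemma qext_zero {k : ℕ} (m j : Fin N) (f : Fin (2 * k) → Fin N) {x : Fin (2 * (k + 1))}
    (hx : (x : ℕ) = 0) : qext m j f x = m := by simp [qext, hx]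

lemma qext_one {k : ℕ} (m j : Fin N) (f : Fin (2 * k) → Fin N) {x : Fin (2 * (k + 1))}
    (hx : (x : ℕ) = 1) : qext m j f x = j := by simp [qext, hx]

lemma qext_ge {k : ℕ} (m j : Fin N) (f : Fin (2 * k) → Fin N) {x : Fin (2 * (k + 1))}
    (hx : 2 ≤ (x : ℕ)) : qext m j f x = f ⟨(x : ℕ) - 2, by have := x.isLt; omega⟩ := by
  have h0 : (x : ℕ) ≠ 0 := by omega
  have h1 : (x : ℕ) ≠ 1 := by omega
  simp [qext, h0, h1]

lemma finv_qext {k : ℕ} (m j : Fin N) (f : Fin (2 * k) → Fin N)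
    (hmj : m < j) (hmf : ∀ x, m < f x) :
    finv (qext m j f) =
      (Finset.univ.filter (fun x : Fin (2 * k) => f x < j)).card + finv f := by
  set g := qext m j f with hg
  have hmg : ∀ y, m ≤ g y := by
    intro y
    rcases Nat.lt_or_ge (y : ℕ) 2 with hy | hy
    · rcases Nat.lt_or_ge (y : ℕ) 1 with hy0 | hy1
      · rw [hg, qext_zero m j f (by omega)]
      · rw [hg, qext_one m j f (by omega)]; exact hmj.le
    · rw [hg, qext_ge m j f hy]; exact (hmf _).le
  have key : ∀ p : Fin (2 * (k + 1)) × Fin (2 * (k + 1)), p.1 < p.2 → g p.2 < g p.1 →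
      1 ≤ (p.1 : ℕ) ∧ 2 ≤ (p.2 : ℕ) := by
    intro p h1 h2
    have hp1 : 1 ≤ (p.1 : ℕ) := by
      by_contra h
      have h0 : (p.1 : ℕ) = 0 := by omega
      rw [hg, qext_zero m j f h0] at h2
      exact absurd h2 (not_lt.mpr (hmg p.2))
    have hlt : (p.1 : ℕ) < (p.2 : ℕ) := h1
    exact ⟨hp1, by omega⟩
  rw [finv, finv, ← Finset.card_disjSum]
  refine Finset.card_bij
    (fun p hp =>
      if h1 : (p.1 : ℕ) = 1 then
        Sum.inl (⟨(p.2 : ℕ) - 2, by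
          have h := Finset.mem_filter.mp hp
          have hk := key p h.2.1 h.2.2
          have := p.2.isLt; omega⟩ : Fin (2 * k))
      else
        Sum.inr ((⟨(p.1 : ℕ) - 2, by
          have h := Finset.mem_filter.mp hp
          have hk := key p h.2.1 h.2.2
          have := p.1.isLt; omega⟩ : Fin (2 * k)),
          (⟨(p.2 : ℕ) - 2, by
          have h := Finset.mem_filter.mp hp
          have hk := key p h.2.1 h.2.2
          have := p.2.isLt; omega⟩ : Fin (2 * k))))
    ?_ ?_ ?_
  · -- hi : maps into disjSum
    intro p hp
    obtain ⟨-, hlt, hinv⟩ := Finset.mem_filter.mp hp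
    have hk := key p hlt hinv
    beta_reduce
    by_cases h1 : (p.1 : ℕ) = 1
    · rw [dif_pos h1, Finset.inl_mem_disjSum, Finset.mem_filter]
      refine ⟨Finset.mem_univ _, ?_⟩
      have e2 : g p.2 = f ⟨(p.2 : ℕ) - 2, by have := p.2.isLt; omega⟩ :=
        qext_ge m j f hk.2
      have e1 : g p.1 = j := qext_one m j f h1
      rw [e2, e1] at hinv
      exact hinv
    · rw [dif_neg h1, Finset.inr_mem_disjSum, Finset.mem_filter]
      have hp1 : 2 ≤ (p.1 : ℕ) := by omega
      have e1 : g p.1 = f ⟨(p.1 : ℕ) - 2, by have := p.1.isLt; omega⟩ := qext_ge m j f hp1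
      have e2 : g p.2 = f ⟨(p.2 : ℕ) - 2, by have := p.2.isLt; omega⟩ := qext_ge m j f hk.2
      rw [e1, e2] at hinv
      refine ⟨Finset.mem_univ _, ?_, hinv⟩
      have : (p.1 : ℕ) < (p.2 : ℕ) := hlt
      exact Fin.mk_lt_mk.mpr (by omega)
  · -- injective
    intro p1 hp1 p2 hp2 heq
    obtain ⟨-, hlt1, hinv1⟩ := Finset.mem_filter.mp hp1
    obtain ⟨-, hlt2, hinv2⟩ := Finset.mem_filter.mp hp2
    have hk1 := key p1 hlt1 hinv1
    have hk2 := key p2 hlt2 hinv2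
    beta_reduce at heq
    by_cases c1 : (p1.1 : ℕ) = 1 <;> by_cases c2 : (p2.1 : ℕ) = 1
    · rw [dif_pos c1, dif_pos c2] at heq
      have h2 : (p1.2 : ℕ) - 2 = (p2.2 : ℕ) - 2 := by
        simpa using heq
      exact Prod.ext (Fin.ext (by omega)) (Fin.ext (by omega))
    · rw [dif_pos c1, dif_neg c2] at heq
      exact absurd heq (by simp)
    · rw [dif_neg c1, dif_pos c2] at heq
      exact absurd heq (by simp)
    · rw [dif_neg c1, dif_neg c2] at heq
      simp only [Sum.inr.injEq, Prod.mk.injEq, Fin.mk.injEq] at heq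
      exact Prod.ext (Fin.ext (by omega)) (Fin.ext (by omega))
  · -- surjective
    intro c hc
    rcases c with x | pq
    · rw [Finset.inl_mem_disjSum, Finset.mem_filter] at hc
      have hmem : ((⟨1, by omega⟩ : Fin (2 * (k + 1))),
          (⟨(x : ℕ) + 2, by have := x.isLt; omega⟩ : Fin (2 * (k + 1)))) ∈
          Finset.filter (fun p : Fin (2 * (k + 1)) × Fin (2 * (k + 1)) =>
            p.1 < p.2 ∧ g p.2 < g p.1) Finset.univ := by
        rw [Finset.mem_filter]
        refine ⟨Finset.mem_univ _, Fin.mk_lt_mk.mpr (by omega), ?_⟩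
        have e1 : g (⟨1, by omega⟩ : Fin (2 * (k + 1))) = j := qext_one m j f rfl
        have e2 : g (⟨(x : ℕ) + 2, by have := x.isLt; omega⟩ : Fin (2 * (k + 1))) = f x := by
          rw [hg, qext_ge m j f (by simp)]
          exact congrArg f (Fin.ext (by simp))
        rw [e1, e2]
        exact hc.2
      refine ⟨_, hmem, ?_⟩
      beta_reduce
      rw [dif_pos rfl]
      exact congrArg Sum.inl (Fin.ext (by simp))
    · rw [Finset.inr_mem_disjSum, Finset.mem_filter] at hc
      obtain ⟨-, hlt, hinv⟩ := hc
      have hltn : (pq.1 : ℕ) < (pq.2 : ℕ) := hlt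
      have hmem : ((⟨(pq.1 : ℕ) + 2, by have := pq.1.isLt; omega⟩ : Fin (2 * (k + 1))),
          (⟨(pq.2 : ℕ) + 2, by have := pq.2.isLt; omega⟩ : Fin (2 * (k + 1)))) ∈
          Finset.filter (fun p : Fin (2 * (k + 1)) × Fin (2 * (k + 1)) =>
            p.1 < p.2 ∧ g p.2 < g p.1) Finset.univ := by
        rw [Finset.mem_filter]
        refine ⟨Finset.mem_univ _, Fin.mk_lt_mk.mpr (by omega), ?_⟩
        have e1 : g (⟨(pq.1 : ℕ) + 2, by have := pq.1.isLt; omega⟩ : Fin (2 * (k + 1))) = f pq.1 := by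
          rw [hg, qext_ge m j f (by simp)]
          exact congrArg f (Fin.ext (by simp))
        have e2 : g (⟨(pq.2 : ℕ) + 2, by have := pq.2.isLt; omega⟩ : Fin (2 * (k + 1))) = f pq.2 := by
          rw [hg, qext_ge m j f (by simp)]
          exact congrArg f (Fin.ext (by simp))
        rw [e1, e2]
        exact hinv
      refine ⟨_, hmem, ?_⟩
      beta_reduce
      rw [dif_neg (by simp)]
      refine congrArg Sum.inr (Prod.ext (Fin.ext (by simp)) (Fin.ext (by simp)))

end Aux
section Aux2
variable {N : ℕ} {F : Type*} [Field F] {A : Type*} [Ring A] [Algebra F A]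

lemma qext_eval {k : ℕ} (m j : Fin N) (f : Fin (2 * k) → Fin N)
    (x : Fin (2 * (k + 1))) (y : Fin (2 * k)) (hxy : (x : ℕ) = (y : ℕ) + 2) :
    qext m j f x = f y := by
  rw [qext_ge m j f (by omega)]
  exact congrArg f (Fin.ext (by simp; omega))

lemma mprod_qext {k : ℕ} (b : Fin N → Fin N → A) (m j : Fin N) (f : Fin (2 * k) → Fin N) :
    mprod b (k + 1) (qext m j f) = b m j * mprod b k f := by
  rw [mprod, mprod, List.finRange_succ, List.map_cons, List.prod_cons, List.map_map]
  congr 1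

lemma card_filter_lt {s : Finset (Fin N)} (hne : s.Nonempty) {j : Fin N}
    (hj : j ∈ s.erase (s.min' hne)) :
    (s.filter (· < j)).card - 1 =
      (((s.erase (s.min' hne)).erase j).filter (· < j)).card := by
  set m := s.min' hne with hm
  have hjs : j ∈ s := Finset.mem_of_mem_erase hj
  have hjm : m < j := lt_of_le_of_ne (s.min'_le j hjs) (Ne.symm (Finset.ne_of_mem_erase hj))
  have hs : s = insert m (insert j ((s.erase m).erase j)) := by
    rw [Finset.insert_erase hj, Finset.insert_erase (s.min'_mem hne)]
  conv_lhs => rw [hs]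
  rw [Finset.filter_insert, if_pos hjm, Finset.filter_insert, if_neg (lt_irrefl j),
    Finset.card_insert_of_notMem]
  · omega
  · intro hmem
    have := Finset.mem_of_mem_filter _ hmem
    simp [Finset.mem_erase] at this

lemma card_filter_eq {k : ℕ} {u : Finset (Fin N)} (hu : u.card = 2 * k)
    {f : Fin (2 * k) → Fin N} (hf : f ∈ mset N k u) (j : Fin N) :
    (Finset.univ.filter (fun x : Fin (2 * k) => f x < j)).card = (u.filter (· < j)).card := by
  obtain ⟨hinj, hmem, -, -⟩ := mem_mset_iff.mp hf
  apply Finset.card_bij (fun x _ => f x)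
  · intro x hx
    exact Finset.mem_filter.mpr ⟨hmem x, (Finset.mem_filter.mp hx).2⟩
  · intro x1 h1 x2 h2 h
    exact hinj h
  · intro y hy
    obtain ⟨hyu, hylt⟩ := Finset.mem_filter.mp hy
    obtain ⟨x, rfl⟩ := mset_surj hu hf y hyu
    exact ⟨x, Finset.mem_filter.mpr ⟨Finset.mem_univ _, hylt⟩, rfl⟩

end Aux2
section Aux3
variable {N : ℕ}

lemma qext_mem_mset {k : ℕ} {s : Finset (Fin N)} (hne : s.Nonempty) {j : Fin N}
    (hj : j ∈ s.erase (s.min' hne)) {f : Fin (2 * k) → Fin N}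
    (hf : f ∈ mset N k ((s.erase (s.min' hne)).erase j)) :
    qext (s.min' hne) j f ∈ mset N (k + 1) s := by
  set m := s.min' hne with hm
  obtain ⟨hinj, hmem, h3, h4⟩ := mem_mset_iff.mp hf
  have hjs : j ∈ s := Finset.mem_of_mem_erase hj
  have hjm : m < j := lt_of_le_of_ne (s.min'_le j hjs) (Ne.symm (Finset.ne_of_mem_erase hj))
  have hfs : ∀ x, f x ∈ s := fun x =>
    Finset.mem_of_mem_erase (Finset.mem_of_mem_erase (hmem x))
  have hfj : ∀ x, f x ≠ j := fun x => Finset.ne_of_mem_erase (hmem x)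
  have hfm : ∀ x, f x ≠ m := fun x =>
    Finset.ne_of_mem_erase (Finset.mem_of_mem_erase (hmem x))
  have hmf : ∀ x, m < f x := fun x =>
    lt_of_le_of_ne (s.min'_le _ (hfs x)) (Ne.symm (hfm x))
  have hval : ∀ x : Fin (2 * (k + 1)), (x : ℕ) = 0 ∨ (x : ℕ) = 1 ∨ 2 ≤ (x : ℕ) :=
    fun x => by omega
  refine mem_mset_iff.mpr ⟨?_, ?_, ?_, ?_⟩
  · -- injectivity
    intro x y hxy
    rcases hval x with hx | hx | hx <;> rcases hval y with hy | hy | hy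
    · exact Fin.ext (by omega)
    · rw [qext_zero _ _ _ hx, qext_one _ _ _ hy] at hxy; exact absurd hxy hjm.ne
    · rw [qext_zero _ _ _ hx, qext_ge _ _ _ hy] at hxy; exact absurd hxy.symm (hfm _)
    · rw [qext_one _ _ _ hx, qext_zero _ _ _ hy] at hxy; exact absurd hxy.symm hjm.ne
    · exact Fin.ext (by omega)
    · rw [qext_one _ _ _ hx, qext_ge _ _ _ hy] at hxy; exact absurd hxy.symm (hfj _)
    · rw [qext_ge _ _ _ hx, qext_zero _ _ _ hy] at hxy; exact absurd hxy (hfm _)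
    · rw [qext_ge _ _ _ hx, qext_one _ _ _ hy] at hxy; exact absurd hxy (hfj _)
    · rw [qext_ge _ _ _ hx, qext_ge _ _ _ hy] at hxy
      have h2 : (x : ℕ) - 2 = (y : ℕ) - 2 := congrArg Fin.val (hinj hxy)
      exact Fin.ext (by omega)
  · -- maps into s
    intro x
    rcases hval x with hx | hx | hx
    · rw [qext_zero _ _ _ hx]; exact s.min'_mem hne
    · rw [qext_one _ _ _ hx]; exact hjs
    · rw [qext_ge _ _ _ hx]; exact hfs _
  · -- adjacent condition
    intro i
    rcases Nat.eq_zero_or_pos (i : ℕ) with hi | hi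
    · rw [qext_zero _ _ _ (by simp [hi]), qext_one _ _ _ (by simp [hi])]
      exact hjm
    · have hle : 2 ≤ 2 * (i : ℕ) := by omega
      rw [qext_ge _ _ _ (by simpa using hle), qext_ge _ _ _ (by simp; omega)]
      have := h3 ⟨(i : ℕ) - 1, by have := i.isLt; omega⟩
      convert this using 2 <;> exact Fin.ext (by simp; omega)
  · -- increasing condition
    intro i l hil
    have hiln : (i : ℕ) < (l : ℕ) := hil
    rcases Nat.eq_zero_or_pos (i : ℕ) with hi | hi
    · rw [qext_zero _ _ _ (by simp [hi]), qext_ge _ _ _ (by simp; omega)]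
      exact hmf _
    · rw [qext_ge _ _ _ (by simp; omega), qext_ge _ _ _ (by simp; omega)]
      have := h4 ⟨(i : ℕ) - 1, by have := i.isLt; omega⟩ ⟨(l : ℕ) - 1, by have := l.isLt; omega⟩
        (by simp [Fin.lt_def]; omega)
      convert this using 2 <;> exact Fin.ext (by simp; omega)

lemma mset_fst {k : ℕ} {s : Finset (Fin N)} (hne : s.Nonempty) (hs : s.card = 2 * (k + 1))
    {f : Fin (2 * (k + 1)) → Fin N} (hf : f ∈ mset N (k + 1) s) :
    f ⟨0, by omega⟩ = s.min' hne := by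
  obtain ⟨hinj, hmem, h3, h4⟩ := mem_mset_iff.mp hf
  have hlt : ∀ x : Fin (2 * (k + 1)), (x : ℕ) ≠ 0 → f ⟨0, by omega⟩ < f x := by
    intro x hx
    have h30 := h3 ⟨0, by omega⟩
    rcases Nat.even_or_odd (x : ℕ) with ⟨i, hi⟩ | ⟨i, hi⟩
    · -- x = 2i, i ≥ 1
      have hi1 : 1 ≤ i := by omega
      have := h4 ⟨0, by omega⟩ ⟨i, by have := x.isLt; omega⟩ (by simp [Fin.lt_def]; omega)
      convert this using 2 <;> exact Fin.ext (by simp <;> omega)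
    · -- x = 2i + 1
      have hx2 : f ⟨2 * i, by have := x.isLt; omega⟩ < f x := by
        have := h3 ⟨i, by have := x.isLt; omega⟩
        convert this using 2 <;> exact Fin.ext (by simp; omega)
      rcases Nat.eq_zero_or_pos i with hi0 | hi0
      · refine lt_of_le_of_lt (le_of_eq (congrArg f (Fin.ext ?_))) hx2
        simp; omega
      · refine lt_trans ?_ hx2
        have := h4 ⟨0, by omega⟩ ⟨i, by have := x.isLt; omega⟩ (by simp [Fin.lt_def]; omega)
        exact this
  have hmem0 : f ⟨0, by omega⟩ ∈ s := hmem _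
  refine le_antisymm ?_ (s.min'_le _ hmem0)
  obtain ⟨x, hx⟩ := mset_surj hs hf (s.min' hne) (s.min'_mem hne)
  rcases Nat.eq_zero_or_pos (x : ℕ) with hx0 | hx0
  · have heq : f ⟨0, by omega⟩ = f x := congrArg f (Fin.ext (by simp; omega))
    exact le_of_eq (heq.trans hx)
  · have hl := hlt x (by omega)
    rw [hx] at hl
    exact le_of_lt hl

end Aux3
section Aux4
variable {N : ℕ}

lemma mset_snd_mem {k : ℕ} {s : Finset (Fin N)} (hne : s.Nonempty) (hs : s.card = 2 * (k + 1))
    {f : Fin (2 * (k + 1)) → Fin N} (hf : f ∈ mset N (k + 1) s) :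
    f ⟨1, by omega⟩ ∈ s.erase (s.min' hne) := by
  obtain ⟨hinj, hmem, h3, h4⟩ := mem_mset_iff.mp hf
  refine Finset.mem_erase.mpr ⟨?_, hmem _⟩
  rw [← mset_fst hne hs hf]
  intro h
  have := hinj h
  simp [Fin.ext_iff] at this

lemma mset_rest_mem {k : ℕ} {s : Finset (Fin N)} (hne : s.Nonempty) (hs : s.card = 2 * (k + 1))
    {f : Fin (2 * (k + 1)) → Fin N} (hf : f ∈ mset N (k + 1) s) :
    (fun x : Fin (2 * k) => f ⟨(x : ℕ) + 2, by have := x.isLt; omega⟩) ∈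
      mset N k ((s.erase (s.min' hne)).erase (f ⟨1, by omega⟩)) := by
  obtain ⟨hinj, hmem, h3, h4⟩ := mem_mset_iff.mp hf
  have hf0 := mset_fst hne hs hf
  refine mem_mset_iff.mpr ⟨?_, ?_, ?_, ?_⟩
  · intro x y hxy
    have := hinj hxy
    have h2 : (x : ℕ) + 2 = (y : ℕ) + 2 := congrArg Fin.val this
    exact Fin.ext (by omega)
  · intro x
    refine Finset.mem_erase.mpr ⟨?_, Finset.mem_erase.mpr ⟨?_, hmem _⟩⟩
    · intro h
      have := hinj h
      simp [Fin.ext_iff] at this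
      rw [Nat.one_mod_eq_one.mpr (by omega)] at this
      omega
    · rw [← hf0]
      intro h
      have := hinj h
      simp [Fin.ext_iff] at this
  · intro i
    have := h3 ⟨(i : ℕ) + 1, by have := i.isLt; omega⟩
    convert this using 2 <;> exact Fin.ext (by simp; omega)
  · intro i l hil
    have hiln : (i : ℕ) < (l : ℕ) := hil
    have := h4 ⟨(i : ℕ) + 1, by have := i.isLt; omega⟩ ⟨(l : ℕ) + 1, by have := l.isLt; omega⟩
      (Fin.mk_lt_mk.mpr (by omega))
    convert this using 2 <;> exact Fin.ext (by simp; omega)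

lemma qext_rest {k : ℕ} {s : Finset (Fin N)} (hne : s.Nonempty) (hs : s.card = 2 * (k + 1))
    {f : Fin (2 * (k + 1)) → Fin N} (hf : f ∈ mset N (k + 1) s) :
    qext (s.min' hne) (f ⟨1, by omega⟩)
      (fun x : Fin (2 * k) => f ⟨(x : ℕ) + 2, by have := x.isLt; omega⟩) = f := by
  funext x
  rcases (show (x : ℕ) = 0 ∨ (x : ℕ) = 1 ∨ 2 ≤ (x : ℕ) by omega) with hx | hx | hx
  · rw [qext_zero _ _ _ hx, ← mset_fst hne hs hf]
    exact congrArg f (Fin.ext (by simp; omega))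
  · rw [qext_one _ _ _ hx]
    exact congrArg f (Fin.ext (by simp; omega))
  · rw [qext_ge _ _ _ hx]
    exact congrArg f (Fin.ext (by simp; omega))

end Aux4
section Main
variable {N : ℕ} {F : Type*} [Field F] {A : Type*} [Ring A] [Algebra F A]

lemma qPfAux_eq_sum (q : F) (b : Fin N → Fin N → A) :
    ∀ (k : ℕ) (s : Finset (Fin N)), s.card = 2 * k →
      qPfAux q b k s = ∑ f ∈ mset N k s, (-q) ^ finv f • mprod b k f := by
  intro k
  induction k with
  | zero =>
    intro s hs
    have hs0 : s = ∅ := Finset.card_eq_zero.mp (by omega)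
    subst hs0
    rw [qPfAux]
    have hm : mset N 0 ∅ = Finset.univ := by
      ext f
      simp only [mset, Finset.mem_filter, Finset.mem_univ, true_and, iff_true]
      exact ⟨fun a => a.elim0, fun x => x.elim0, fun i => i.elim0, fun i => i.elim0⟩
    have hval : ∀ f : Fin (2 * 0) → Fin N, (-q) ^ finv f • mprod b 0 f = 1 := by
      intro f
      have h1 : finv f = 0 := by
        rw [finv]
        apply Finset.card_eq_zero.mpr
        ext p
        exact p.1.elim0
      have h2 : mprod b 0 f = 1 := by rw [mprod]; simp [List.finRange]
      rw [h1, h2, pow_zero, one_smul]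
    rw [hm, Finset.sum_congr rfl (fun f _ => hval f), Finset.sum_const, Finset.card_univ]
    simp
  | succ k ih =>
    intro s hs
    have hne : s.Nonempty := Finset.card_pos.mp (by omega)
    rw [qPfAux, dif_pos hne]
    set m := s.min' hne with hm
    have step : ∀ j ∈ s.erase m,
        (-q) ^ ((s.filter (· < j)).card - 1) • (b m j * qPfAux q b k ((s.erase m).erase j))
        = ∑ f ∈ mset N k ((s.erase m).erase j),
            (-q) ^ (((s.filter (· < j)).card - 1) + finv f) • (b m j * mprod b k f) := by
      intro j hj
      have hcard : ((s.erase m).erase j).card = 2 * k := by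
        rw [Finset.card_erase_of_mem hj, Finset.card_erase_of_mem (s.min'_mem hne)]
        omega
      rw [ih _ hcard, Finset.mul_sum, Finset.smul_sum]
      refine Finset.sum_congr rfl fun f hf => ?_
      rw [mul_smul_comm, smul_smul, ← pow_add]
    rw [Finset.sum_congr rfl step, Finset.sum_sigma']
    refine Finset.sum_nbij' (i := fun p => qext m p.1 p.2)
      (j := fun f => ⟨f ⟨1, by omega⟩,
        fun x : Fin (2 * k) => f ⟨(x : ℕ) + 2, by have := x.isLt; omega⟩⟩)
      ?_ ?_ ?_ ?_ ?_
    · intro p hp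
      obtain ⟨hp1, hp2⟩ := Finset.mem_sigma.mp hp
      exact qext_mem_mset hne hp1 hp2
    · intro f hf
      exact Finset.mem_sigma.mpr ⟨mset_snd_mem hne hs hf, mset_rest_mem hne hs hf⟩
    · intro p hp
      obtain ⟨hp1, hp2⟩ := Finset.mem_sigma.mp hp
      obtain ⟨j, f⟩ := p
      beta_reduce
      refine Sigma.ext ?_ (heq_of_eq (funext fun x => ?_))
      · exact qext_one m j f (x := ⟨1, by omega⟩) rfl
      · exact qext_eval m j f ⟨(x : ℕ) + 2, by have := x.isLt; omega⟩ x (by simp)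
    · intro f hf
      exact qext_rest hne hs hf
    · intro p hp
      obtain ⟨hp1, hp2⟩ := Finset.mem_sigma.mp hp
      obtain ⟨j, f⟩ := p
      simp only at hp1 hp2 ⊢
      have hujcard : ((s.erase m).erase j).card = 2 * k := by
        rw [Finset.card_erase_of_mem hp1, Finset.card_erase_of_mem (s.min'_mem hne)]
        omega
      have hjm : m < j :=
        lt_of_le_of_ne (s.min'_le j (Finset.mem_of_mem_erase hp1))
          (Ne.symm (Finset.ne_of_mem_erase hp1))
      have hmf : ∀ x, m < f x := by
        intro x
        have hx := (mem_mset_iff.mp hp2).2.1 x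
        have hxs : f x ∈ s :=
          Finset.mem_of_mem_erase (Finset.mem_of_mem_erase hx)
        exact lt_of_le_of_ne (s.min'_le _ hxs)
          (Ne.symm (Finset.ne_of_mem_erase (Finset.mem_of_mem_erase hx)))
      rw [finv_qext m j f hjm hmf, mprod_qext, card_filter_lt hne hp1,
        card_filter_eq hujcard hp2 j]

end Main
/-- explicit formula for the quantum Pfaffian:
`[1,…,2n] = Σ_{π ∈ Π} (-q)^{ℓ(π)} b_{i_1 j_1} ⋯ b_{i_n j_n}`, where `Π` consists of the
perfect matchings `{(i_1,j_1),…,(i_n,j_n)}` of `{1,…,2n}` with `i_k < j_k` and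
`i_1 < i_2 < ⋯ < i_n`, encoded as permutations `σ` with `σ(2k-1) = i_k`, `σ(2k) = j_k`. -/
theorem quantum_pfaffian_explicit_formula
    (F : Type*) [Field F] (q : F) (hq : q ≠ 0) (n : ℕ)
    (A : Type*) [Ring A] [Algebra F A]
    (b : Fin (2 * n) → Fin (2 * n) → A)
    (hb : ∀ i j k l : Fin (2 * n), i < j → j < k → k < l →
      b i j * b k l + (-q) • (b i k * b j l) + (-q) ^ 2 • (b i l * b j k)
        = b k l * b i j + (-q) ^ (-1 : ℤ) • (b j l * b i k)
            + (-q) ^ (-2 : ℤ) • (b j k * b i l)) :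
    qPf q b Finset.univ
      = ∑ σ ∈ (Finset.univ : Finset (Equiv.Perm (Fin (2 * n)))).filter
          (fun σ => (∀ k : Fin n,
              σ ⟨2 * (k : ℕ), by have := k.isLt; omega⟩ < σ ⟨2 * (k : ℕ) + 1, by have := k.isLt; omega⟩) ∧
            (∀ k l : Fin n, k < l →
              σ ⟨2 * (k : ℕ), by have := k.isLt; omega⟩ < σ ⟨2 * (l : ℕ), by have := l.isLt; omega⟩)),
          (-q) ^ inversionNumber σ •
            ((List.finRange n).map (fun k : Fin n =>
              b (σ ⟨2 * (k : ℕ), by have := k.isLt; omega⟩) (σ ⟨2 * (k : ℕ) + 1, by have := k.isLt; omega⟩))).prod := by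

  have hcard : (Finset.univ : Finset (Fin (2 * n))).card = 2 * n := by simp
  rw [qPf, hcard]
  have h2 : 2 * n / 2 = n := by omega
  rw [h2, qPfAux_eq_sum q b n Finset.univ hcard]
  refine Finset.sum_bij
    (i := fun f hf => Equiv.ofBijective f
      ((Fintype.bijective_iff_injective_and_card f).mpr ⟨(mem_mset_iff.mp hf).1, by simp⟩))
    ?_ ?_ ?_ ?_
  · intro f hf
    obtain ⟨hinj, -, h3, h4⟩ := mem_mset_iff.mp hf
    refine Finset.mem_filter.mpr ⟨Finset.mem_univ _, ?_, ?_⟩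
    · intro kk
      exact h3 kk
    · intro kk l hkl
      exact h4 kk l hkl
  · intro f1 hf1 f2 hf2 h
    funext x
    exact congrFun (congrArg DFunLike.coe h) x
  · intro σ hσ
    obtain ⟨-, hσ1, hσ2⟩ := Finset.mem_filter.mp hσ
    refine ⟨⇑σ, mem_mset_iff.mpr ⟨σ.injective, fun x => Finset.mem_univ _, ?_, ?_⟩, ?_⟩
    · intro kk
      exact hσ1 kk
    · intro kk l h
      exact hσ2 kk l h
    · exact Equiv.ext fun x => rfl
  · intro f hf
    rfl
end

section
/- Expansion of the quantum Pfaffian along an arbitrary pair: in the algebra B, Σ_{i<j} (-q)^{i+j-3} [i,j][1,2,...,î,...,ĵ,...,2n] = (Σ_{i=0}^{n-1} q^{4i}) [1,2,...,2n], where [1,...,2n] is the quantum Pfaffian and the sum runs over all pairs 1 ≤ i < j ≤ 2n. -/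
section Aux

variable {F : Type*} [Field F] {A : Type*} [Ring A] [Algebra F A] {N : ℕ}
variable (q : F) (b : Fin N → Fin N → A)

/-- qPf as qPfAux when the cardinality is known even. -/
lemma qPf_eq_aux {m : ℕ} {s : Finset (Fin N)} (h : s.card = 2 * m) :
    qPf q b s = qPfAux q b m s := by
  unfold qPf; rw [h]; congr 1; omega

/-- One-step unfolding of the pfaffian. -/
lemma qPf_unfold {m : ℕ} {s : Finset (Fin N)} (hc : s.card = 2 * m + 2)
    (hne : s.Nonempty) :
    qPf q b s = ∑ j ∈ s.erase (s.min' hne),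
      (-q) ^ ((s.filter (· < j)).card - 1) •
        (b (s.min' hne) j * qPf q b ((s.erase (s.min' hne)).erase j)) := by
  rw [qPf_eq_aux q b (show s.card = 2 * (m+1) by omega)]
  rw [qPfAux, dif_pos hne]
  refine Finset.sum_congr rfl fun j hj => ?_
  rw [qPf_eq_aux q b ?_]
  rw [Finset.card_erase_of_mem hj,
    Finset.card_erase_of_mem (s.min'_mem hne), hc]
  omega

end Aux

section Reindex

variable {M : Type*} [AddCommMonoid M] {N : ℕ}

lemma sum3_rot (t : Finset (Fin N)) (Fn : Fin N → Fin N → Fin N → M) :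
    ∑ i ∈ t, ∑ j ∈ t, ∑ k ∈ t, Fn i j k = ∑ k ∈ t, ∑ i ∈ t, ∑ j ∈ t, Fn i j k :=
  calc ∑ i ∈ t, ∑ j ∈ t, ∑ k ∈ t, Fn i j k
      = ∑ i ∈ t, ∑ k ∈ t, ∑ j ∈ t, Fn i j k :=
        Finset.sum_congr rfl fun i _ => Finset.sum_comm
    _ = ∑ k ∈ t, ∑ i ∈ t, ∑ j ∈ t, Fn i j k := Finset.sum_comm

lemma T1ite (t : Finset (Fin N)) (f : Fin N → Fin N → Fin N → M) :
    (∑ i ∈ t, ∑ j ∈ t, ∑ k ∈ t, if i < j ∧ k ≠ i ∧ k ≠ j then f i j k else 0)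
    = ∑ x ∈ t, ∑ y ∈ t, ∑ z ∈ t,
        if x < y ∧ y < z then f y z x + f x z y + f x y z else 0 := by
  have split : ∀ i j k : Fin N, (if i < j ∧ k ≠ i ∧ k ≠ j then f i j k else 0) =
      (if k < i ∧ i < j then f i j k else 0) + (if i < k ∧ k < j then f i j k else 0)
        + (if i < j ∧ j < k then f i j k else 0) := by
    intro i j k
    simp only [Fin.lt_def, ne_eq, Fin.ext_iff]
    split_ifs <;> (try (exfalso; omega)) <;> simp
  have split' : ∀ x y z : Fin N,
      (if x < y ∧ y < z then f y z x + f x z y + f x y z else 0) =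
      (if x < y ∧ y < z then f y z x else 0) + (if x < y ∧ y < z then f x z y else 0)
        + (if x < y ∧ y < z then f x y z else 0) := by
    intro x y z; split_ifs <;> simp
  simp only [split, split', Finset.sum_add_distrib]
  congr 1
  · congr 1
    · exact sum3_rot t _
    · exact Finset.sum_congr rfl fun i _ => Finset.sum_comm

lemma T2ite (t : Finset (Fin N)) (g : Fin N → Fin N → Fin N → M) :
    (∑ k ∈ t, ∑ i ∈ t, ∑ j ∈ t, if i ≠ k ∧ j ≠ k ∧ i < j then g k i j else 0)
    = ∑ x ∈ t, ∑ y ∈ t, ∑ z ∈ t,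
        if x < y ∧ y < z then g x y z + g y x z + g z x y else 0 := by
  have split : ∀ k i j : Fin N, (if i ≠ k ∧ j ≠ k ∧ i < j then g k i j else 0) =
      (if k < i ∧ i < j then g k i j else 0) + (if i < k ∧ k < j then g k i j else 0)
        + (if i < j ∧ j < k then g k i j else 0) := by
    intro k i j
    simp only [Fin.lt_def, ne_eq, Fin.ext_iff]
    split_ifs <;> (try (exfalso; omega)) <;> simp
  have split' : ∀ x y z : Fin N,
      (if x < y ∧ y < z then g x y z + g y x z + g z x y else 0) =
      (if x < y ∧ y < z then g x y z else 0) + (if x < y ∧ y < z then g y x z else 0)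
        + (if x < y ∧ y < z then g z x y else 0) := by
    intro x y z; split_ifs <;> simp
  simp only [split, split', Finset.sum_add_distrib]
  congr 1
  congr 1
  · exact Finset.sum_comm
  · exact (sum3_rot t _).symm

lemma conv1 (t : Finset (Fin N)) (f : Fin N → Fin N → Fin N → M) :
    (∑ i ∈ t, ∑ j ∈ t.filter (i < ·), ∑ k ∈ (t.erase i).erase j, f i j k)
    = ∑ i ∈ t, ∑ j ∈ t, ∑ k ∈ t, if i < j ∧ k ≠ i ∧ k ≠ j then f i j k else 0 := by
  refine Finset.sum_congr rfl fun i _ => ?_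
  rw [Finset.sum_filter]
  refine Finset.sum_congr rfl fun j _ => ?_
  have hset : (t.erase i).erase j = t.filter (fun k => k ≠ i ∧ k ≠ j) := by
    ext k; simp only [Finset.mem_erase, Finset.mem_filter]; tauto
  rw [hset, Finset.sum_filter]
  by_cases hij : i < j <;> simp [hij]

lemma conv2 (t : Finset (Fin N)) (g : Fin N → Fin N → Fin N → M) :
    (∑ k ∈ t, ∑ i ∈ t.erase k, ∑ j ∈ (t.erase k).filter (i < ·), g k i j)
    = ∑ k ∈ t, ∑ i ∈ t, ∑ j ∈ t, if i ≠ k ∧ j ≠ k ∧ i < j then g k i j else 0 := by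
  refine Finset.sum_congr rfl fun k _ => ?_
  rw [← Finset.filter_ne', Finset.sum_filter]
  refine Finset.sum_congr rfl fun i _ => ?_
  have hset : (t.filter (fun a => a ≠ k)).filter (i < ·)
      = t.filter (fun j => j ≠ k ∧ i < j) := by
    rw [Finset.filter_filter]
  rw [hset, Finset.sum_filter]
  by_cases hik : i ≠ k <;> simp [hik]

lemma T1 (t : Finset (Fin N)) (f : Fin N → Fin N → Fin N → M) :
    (∑ i ∈ t, ∑ j ∈ t.filter (i < ·), ∑ k ∈ (t.erase i).erase j, f i j k)
    = ∑ x ∈ t, ∑ y ∈ t.filter (x < ·), ∑ z ∈ t.filter (y < ·),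
        (f y z x + f x z y + f x y z) := by
  rw [conv1, T1ite]
  refine (Finset.sum_congr rfl fun x _ => ?_).symm
  rw [Finset.sum_filter]
  refine Finset.sum_congr rfl fun y _ => ?_
  rw [Finset.sum_filter]
  by_cases hxy : x < y <;> simp [hxy]

lemma T2 (t : Finset (Fin N)) (g : Fin N → Fin N → Fin N → M) :
    (∑ k ∈ t, ∑ i ∈ t.erase k, ∑ j ∈ (t.erase k).filter (i < ·), g k i j)
    = ∑ x ∈ t, ∑ y ∈ t.filter (x < ·), ∑ z ∈ t.filter (y < ·),
        (g x y z + g y x z + g z x y) := by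
  rw [conv2, T2ite]
  refine (Finset.sum_congr rfl fun x _ => ?_).symm
  rw [Finset.sum_filter]
  refine Finset.sum_congr rfl fun y _ => ?_
  rw [Finset.sum_filter]
  by_cases hxy : x < y <;> simp [hxy]

end Reindex

section Core

variable {F : Type*} [Field F] {A : Type*} [Ring A] [Algebra F A]

lemma quad {q : F} (hq : q ≠ 0) {u1 v1 u2 v2 u3 v3 P : A}
    (hrel : u1 * v1 + (-q) • (u2 * v2) + (-q) ^ 2 • (u3 * v3)
      = v1 * u1 + (-q) ^ (-1 : ℤ) • (v2 * u2) + (-q) ^ (-2 : ℤ) • (v3 * u3))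
    (e : ℕ) :
    (-q) ^ (e+4) • (v1 * (u1 * P)) + (-q) ^ (e+3) • (v2 * (u2 * P))
        + (-q) ^ (e+2) • (v3 * (u3 * P))
    = q ^ 4 • ((-q) ^ e • (u1 * (v1 * P)) + (-q) ^ (e+1) • (u2 * (v2 * P))
        + (-q) ^ (e+2) • (u3 * (v3 * P))) := by
  have hne : (-q) ≠ 0 := neg_ne_zero.mpr hq
  have s1 : (-q) ^ (e+4) * (-q) ^ (-1 : ℤ) = (-q) ^ (e+3) := by
    rw [zpow_neg_one]
    field_simp
    ring
  have s2 : (-q) ^ (e+4) * (-q) ^ (-2 : ℤ) = (-q) ^ (e+2) := by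
    rw [show (-2 : ℤ) = -(2 : ℕ) by norm_num, zpow_neg, zpow_natCast]
    field_simp
    ring
  have s3 : (-q) ^ (e+4) * (-q) = (-q) ^ (e+5) := by ring
  have s4 : (-q) ^ (e+4) * (-q) ^ 2 = (-q) ^ (e+6) := by ring
  have r1 : q ^ 4 * (-q) ^ e = (-q) ^ (e+4) := by ring
  have r2 : q ^ 4 * (-q) ^ (e+1) = (-q) ^ (e+5) := by ring
  have r3 : q ^ 4 * (-q) ^ (e+2) = (-q) ^ (e+6) := by ring
  calc (-q) ^ (e+4) • (v1 * (u1 * P)) + (-q) ^ (e+3) • (v2 * (u2 * P))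
          + (-q) ^ (e+2) • (v3 * (u3 * P))
      = (-q) ^ (e+4) • ((v1 * u1 + (-q) ^ (-1 : ℤ) • (v2 * u2)
          + (-q) ^ (-2 : ℤ) • (v3 * u3)) * P) := by
        simp only [add_mul, smul_mul_assoc, mul_assoc, smul_add, smul_smul, s1, s2]
    _ = (-q) ^ (e+4) • ((u1 * v1 + (-q) • (u2 * v2) + (-q) ^ 2 • (u3 * v3)) * P) := by
        rw [← hrel]
    _ = q ^ 4 • ((-q) ^ e • (u1 * (v1 * P)) + (-q) ^ (e+1) • (u2 * (v2 * P))
          + (-q) ^ (e+2) • (u3 * (v3 * P))) := by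
        simp only [add_mul, smul_mul_assoc, mul_assoc, smul_add, smul_smul, s3, s4, r1, r2, r3]

end Core

section Rank

variable {N : ℕ}

/-- Rank in `s`: the number of elements of `s` below `w`. -/
def rk (s : Finset (Fin N)) (w : Fin N) : ℕ := (s.filter (· < w)).card

lemma rk_erase_lt {s : Finset (Fin N)} {u w : Fin N} (hu : u ∈ s) (huw : u < w) :
    rk (s.erase u) w = rk s w - 1 := by
  unfold rk
  rw [Finset.filter_erase]
  have hmem : u ∈ s.filter (· < w) := Finset.mem_filter.mpr ⟨hu, huw⟩
  rw [Finset.card_erase_of_mem hmem]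

lemma rk_erase_ge {s : Finset (Fin N)} {u w : Fin N} (huw : ¬ u < w) :
    rk (s.erase u) w = rk s w := by
  unfold rk
  rw [Finset.filter_erase, Finset.erase_eq_of_notMem]
  intro hmem
  exact huw (Finset.mem_filter.mp hmem).2

lemma rk_pos {s : Finset (Fin N)} {u w : Fin N} (hu : u ∈ s) (huw : u < w) :
    1 ≤ rk s w :=
  Finset.card_pos.mpr ⟨u, Finset.mem_filter.mpr ⟨hu, huw⟩⟩

lemma rk_lt_rk {s : Finset (Fin N)} {x y : Fin N} (hx : x ∈ s) (hxy : x < y) :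
    rk s x < rk s y := by
  apply Finset.card_lt_card
  constructor
  · intro w hw
    rw [Finset.mem_filter] at hw ⊢
    exact ⟨hw.1, lt_trans hw.2 hxy⟩
  · intro hsub
    have := hsub (Finset.mem_filter.mpr ⟨hx, hxy⟩)
    exact absurd (Finset.mem_filter.mp this).2 (lt_irrefl x)

lemma min'_subset {s t : Finset (Fin N)} (hts : t ⊆ s) (hne : s.Nonempty)
    (hnet : t.Nonempty) (hmem : s.min' hne ∈ t) : t.min' hnet = s.min' hne :=
  le_antisymm (t.min'_le _ hmem) (Finset.le_min' _ _ _ fun w hw => s.min'_le w (hts hw))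

lemma rk_min' {s : Finset (Fin N)} (hne : s.Nonempty) : rk s (s.min' hne) = 0 := by
  unfold rk
  rw [Finset.card_eq_zero, Finset.filter_eq_empty_iff]
  intro w hw
  exact not_lt.mpr (s.min'_le w hw)

lemma filter_min'_lt {s : Finset (Fin N)} (hne : s.Nonempty) :
    s.filter (s.min' hne < ·) = s.erase (s.min' hne) := by
  ext w
  simp only [Finset.mem_filter, Finset.mem_erase]
  constructor
  · rintro ⟨hw, hlt⟩; exact ⟨ne_of_gt hlt, hw⟩
  · rintro ⟨hne', hw⟩; exact ⟨hw, lt_of_le_of_ne (s.min'_le w hw) (Ne.symm hne')⟩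

end Rank

section MinParam

variable {F : Type*} [Field F] {A : Type*} [Ring A] [Algebra F A] {N : ℕ}
variable (q : F) (b : Fin N → Fin N → A)

lemma qPf_unfold_min {m : ℕ} {s : Finset (Fin N)} (hc : s.card = 2 * m + 2)
    (hne : s.Nonempty) {a : Fin N} (hamin : s.min' hne = a) :
    qPf q b s = ∑ j ∈ s.erase a,
      (-q) ^ (rk s j - 1) • (b a j * qPf q b ((s.erase a).erase j)) := by
  subst hamin; exact qPf_unfold q b hc hne

lemma filter_lt_min {s : Finset (Fin N)} (hne : s.Nonempty) {a : Fin N}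
    (hamin : s.min' hne = a) : s.filter (a < ·) = s.erase a := by
  subst hamin; exact filter_min'_lt hne

lemma rk_min_zero {s : Finset (Fin N)} (hne : s.Nonempty) {a : Fin N}
    (hamin : s.min' hne = a) : rk s a = 0 := by
  subst hamin; exact rk_min' hne

end MinParam

section Main

variable {F : Type*} [Field F] {A : Type*} [Ring A] [Algebra F A] {N : ℕ}

theorem GT {q : F} (hq : q ≠ 0) (b : Fin N → Fin N → A)
    (hb : ∀ i j k l : Fin N, i < j → j < k → k < l →
      b i j * b k l + (-q) • (b i k * b j l) + (-q) ^ 2 • (b i l * b j k)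
        = b k l * b i j + (-q) ^ (-1 : ℤ) • (b j l * b i k)
            + (-q) ^ (-2 : ℤ) • (b j k * b i l)) :
    ∀ m : ℕ, ∀ s : Finset (Fin N), s.card = 2 * m →
      (∑ i ∈ s, ∑ j ∈ s.filter (i < ·),
        (-q) ^ (rk s i + rk s j - 1) • (b i j * qPf q b ((s.erase i).erase j)))
      = (∑ t ∈ Finset.range m, q ^ (4 * t)) • qPf q b s := by
  intro m
  induction m with
  | zero =>
    intro s hs
    rw [Finset.card_eq_zero] at hs
    simp [hs]
  | succ M IH =>
    intro s hs
    have hne : s.Nonempty := by rw [← Finset.card_pos, hs]; omega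
    obtain ⟨a, hamin⟩ : ∃ a, s.min' hne = a := ⟨_, rfl⟩
    have haS : a ∈ s := hamin ▸ s.min'_mem hne
    have hcs : s.card = 2 * M + 2 := by omega
    have hcard' : (s.erase a).card = 2 * M + 1 := by
      rw [Finset.card_erase_of_mem haS, hs]
      omega
    have hlt : ∀ w ∈ s.erase a, a < w := fun w hw =>
      lt_of_le_of_ne (hamin ▸ s.min'_le w (Finset.mem_of_mem_erase hw))
        (Ne.symm (Finset.ne_of_mem_erase hw))
    rw [← Finset.add_sum_erase _ _ haS]
    -- Part 1 : the `i = a` term is `qPf q b s`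
    have part1 : (∑ j ∈ s.filter (a < ·),
        (-q) ^ (rk s a + rk s j - 1) • (b a j * qPf q b ((s.erase a).erase j)))
        = qPf q b s := by
      rw [qPf_unfold_min q b hcs hne hamin, filter_lt_min hne hamin]
      refine Finset.sum_congr rfl fun j hj => ?_
      rw [rk_min_zero hne hamin, zero_add]
    -- Part 2
    have part2 : (∑ i ∈ s.erase a, ∑ j ∈ s.filter (i < ·),
        (-q) ^ (rk s i + rk s j - 1) • (b i j * qPf q b ((s.erase i).erase j)))
        = (q ^ 4 * ∑ t ∈ Finset.range M, q ^ (4 * t)) • qPf q b s := by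
      have step2 : (∑ i ∈ s.erase a, ∑ j ∈ s.filter (i < ·),
          (-q) ^ (rk s i + rk s j - 1) • (b i j * qPf q b ((s.erase i).erase j)))
          = ∑ i ∈ s.erase a, ∑ j ∈ (s.erase a).filter (i < ·),
              ∑ k ∈ ((s.erase a).erase i).erase j,
              (-q) ^ (rk s i + rk s j - 1) • (b i j *
                ((-q) ^ (rk ((s.erase i).erase j) k - 1) •
                  (b a k * qPf q b ((((s.erase a).erase i).erase j).erase k)))) := by
        refine Finset.sum_congr rfl fun i hi => ?_
        have hiS : i ∈ s := Finset.mem_of_mem_erase hi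
        have hai : a < i := hlt i hi
        have hset : s.filter (i < ·) = (s.erase a).filter (i < ·) := by
          ext w
          simp only [Finset.mem_filter, Finset.mem_erase]
          constructor
          · rintro ⟨hw, hiw⟩
            exact ⟨⟨ne_of_gt (lt_trans hai hiw), hw⟩, hiw⟩
          · rintro ⟨⟨_, hw⟩, hiw⟩
            exact ⟨hw, hiw⟩
        rw [hset]
        refine Finset.sum_congr rfl fun j hj => ?_
        obtain ⟨hjmem, hij⟩ := Finset.mem_filter.mp hj
        have hjS : j ∈ s := Finset.mem_of_mem_erase hjmem
        have haj : a < j := lt_trans hai hij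
        have hij' : i ≠ j := ne_of_lt hij
        have hsub2 : ({i, j} : Finset (Fin N)) ⊆ s.erase a := by
          intro w hw
          simp only [Finset.mem_insert, Finset.mem_singleton] at hw
          rcases hw with rfl | rfl
          exacts [hi, hjmem]
        have hM1 : 1 ≤ M := by
          have h2 := Finset.card_le_card hsub2
          rw [Finset.card_pair hij'] at h2
          omega
        have hucard : ((s.erase i).erase j).card = 2 * (M - 1) + 2 := by
          rw [Finset.card_erase_of_mem (Finset.mem_erase.mpr ⟨Ne.symm hij', hjS⟩),
            Finset.card_erase_of_mem hiS, hs]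
          omega
        have hau : a ∈ (s.erase i).erase j :=
          Finset.mem_erase.mpr ⟨ne_of_lt haj, Finset.mem_erase.mpr ⟨ne_of_lt hai, haS⟩⟩
        have hune : ((s.erase i).erase j).Nonempty := ⟨a, hau⟩
        have husub : (s.erase i).erase j ⊆ s :=
          (Finset.erase_subset _ _).trans (Finset.erase_subset _ _)
        have humin : ((s.erase i).erase j).min' hune = a := by
          rw [min'_subset husub hne hune (hamin ▸ hau), hamin]
        rw [qPf_unfold_min q b hucard hune humin, Finset.mul_sum, Finset.smul_sum]
        have hks : ((s.erase i).erase j).erase a = ((s.erase a).erase i).erase j := by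
          ext w
          simp only [Finset.mem_erase]
          tauto
        rw [hks]
      rw [step2]
      rw [T1 (s.erase a) (fun i j k =>
        (-q) ^ (rk s i + rk s j - 1) • (b i j *
          ((-q) ^ (rk ((s.erase i).erase j) k - 1) •
            (b a k * qPf q b ((((s.erase a).erase i).erase j).erase k)))))]
      have step4 : (∑ x ∈ s.erase a, ∑ y ∈ (s.erase a).filter (x < ·),
          ∑ z ∈ (s.erase a).filter (y < ·),
          ((-q) ^ (rk s y + rk s z - 1) • (b y z *
            ((-q) ^ (rk ((s.erase y).erase z) x - 1) •
              (b a x * qPf q b ((((s.erase a).erase y).erase z).erase x)))) +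
          (-q) ^ (rk s x + rk s z - 1) • (b x z *
            ((-q) ^ (rk ((s.erase x).erase z) y - 1) •
              (b a y * qPf q b ((((s.erase a).erase x).erase z).erase y)))) +
          (-q) ^ (rk s x + rk s y - 1) • (b x y *
            ((-q) ^ (rk ((s.erase x).erase y) z - 1) •
              (b a z * qPf q b ((((s.erase a).erase x).erase y).erase z))))))
          = ∑ x ∈ s.erase a, ∑ y ∈ (s.erase a).filter (x < ·),
              ∑ z ∈ (s.erase a).filter (y < ·), q ^ 4 •
              ((-q) ^ (rk s x - 1) • (b a x *
                ((-q) ^ (rk ((s.erase a).erase x) y + rk ((s.erase a).erase x) z - 1) •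
                  (b y z * qPf q b ((((s.erase a).erase x).erase y).erase z)))) +
              (-q) ^ (rk s y - 1) • (b a y *
                ((-q) ^ (rk ((s.erase a).erase y) x + rk ((s.erase a).erase y) z - 1) •
                  (b x z * qPf q b ((((s.erase a).erase y).erase x).erase z)))) +
              (-q) ^ (rk s z - 1) • (b a z *
                ((-q) ^ (rk ((s.erase a).erase z) x + rk ((s.erase a).erase z) y - 1) •
                  (b x y * qPf q b ((((s.erase a).erase z).erase x).erase y))))) := by
        refine Finset.sum_congr rfl fun x hx => Finset.sum_congr rfl fun y hy' =>
          Finset.sum_congr rfl fun z hz' => ?_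
        obtain ⟨hy, hxy⟩ := Finset.mem_filter.mp hy'
        obtain ⟨hz, hyz⟩ := Finset.mem_filter.mp hz'
        have hxS : x ∈ s := Finset.mem_of_mem_erase hx
        have hyS : y ∈ s := Finset.mem_of_mem_erase hy
        have hzS : z ∈ s := Finset.mem_of_mem_erase hz
        have hax : a < x := hlt x hx
        have hay : a < y := hlt y hy
        have haz : a < z := hlt z hz
        have hxz : x < z := lt_trans hxy hyz
        have hp : 1 ≤ rk s x := rk_pos haS hax
        have hpr : rk s x < rk s y := rk_lt_rk hxS hxy
        have hrt : rk s y < rk s z := rk_lt_rk hyS hyz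
        have h1 : rk ((s.erase y).erase z) x = rk s x := by
          rw [rk_erase_ge (asymm hxz), rk_erase_ge (asymm hxy)]
        have h2 : rk ((s.erase x).erase z) y = rk s y - 1 := by
          rw [rk_erase_ge (asymm hyz), rk_erase_lt hxS hxy]
        have h3 : rk ((s.erase x).erase y) z = rk s z - 1 - 1 := by
          rw [rk_erase_lt (Finset.mem_erase.mpr ⟨ne_of_gt hxy, hyS⟩) hyz,
            rk_erase_lt hxS hxz]
        have h4 : rk ((s.erase a).erase x) y = rk s y - 1 - 1 := by
          rw [rk_erase_lt (Finset.mem_erase.mpr ⟨ne_of_gt hax, hxS⟩) hxy,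
            rk_erase_lt haS hay]
        have h5 : rk ((s.erase a).erase x) z = rk s z - 1 - 1 := by
          rw [rk_erase_lt (Finset.mem_erase.mpr ⟨ne_of_gt hax, hxS⟩) hxz,
            rk_erase_lt haS haz]
        have h6 : rk ((s.erase a).erase y) x = rk s x - 1 := by
          rw [rk_erase_ge (asymm hxy), rk_erase_lt haS hax]
        have h7 : rk ((s.erase a).erase y) z = rk s z - 1 - 1 := by
          rw [rk_erase_lt (Finset.mem_erase.mpr ⟨ne_of_gt hay, hyS⟩) hyz,
            rk_erase_lt haS haz]
        have h8 : rk ((s.erase a).erase z) x = rk s x - 1 := by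
          rw [rk_erase_ge (asymm hxz), rk_erase_lt haS hax]
        have h9 : rk ((s.erase a).erase z) y = rk s y - 1 := by
          rw [rk_erase_ge (asymm hyz), rk_erase_lt haS hay]
        have hD1 : (((s.erase a).erase y).erase z).erase x
            = (((s.erase a).erase x).erase y).erase z := by
          ext w; simp only [Finset.mem_erase]; tauto
        have hD2 : (((s.erase a).erase x).erase z).erase y
            = (((s.erase a).erase x).erase y).erase z := by
          ext w; simp only [Finset.mem_erase]; tauto
        have hD4 : (((s.erase a).erase y).erase x).erase z
            = (((s.erase a).erase x).erase y).erase z := by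
          ext w; simp only [Finset.mem_erase]; tauto
        have hD5 : (((s.erase a).erase z).erase x).erase y
            = (((s.erase a).erase x).erase y).erase z := by
          ext w; simp only [Finset.mem_erase]; tauto
        rw [h1, h2, h3, h4, h5, h6, h7, h8, h9, hD1, hD2, hD4, hD5]
        simp only [mul_smul_comm, smul_smul, ← pow_add]
        have E1 : rk s y + rk s z - 1 + (rk s x - 1)
            = (rk s x + rk s y + rk s z - 6) + 4 := by omega
        have E2 : rk s x + rk s z - 1 + (rk s y - 1 - 1)
            = (rk s x + rk s y + rk s z - 6) + 3 := by omega
        have E3 : rk s x + rk s y - 1 + (rk s z - 1 - 1 - 1)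
            = (rk s x + rk s y + rk s z - 6) + 2 := by omega
        have G1 : rk s x - 1 + (rk s y - 1 - 1 + (rk s z - 1 - 1) - 1)
            = rk s x + rk s y + rk s z - 6 := by omega
        have G2 : rk s y - 1 + (rk s x - 1 + (rk s z - 1 - 1) - 1)
            = (rk s x + rk s y + rk s z - 6) + 1 := by omega
        have G3 : rk s z - 1 + (rk s x - 1 + (rk s y - 1) - 1)
            = (rk s x + rk s y + rk s z - 6) + 2 := by omega
        rw [E1, E2, E3, G1, G2, G3]
        exact quad hq (hb a x y z hax hxy hyz) (rk s x + rk s y + rk s z - 6)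
      rw [step4]
      simp only [← Finset.smul_sum]
      rw [← T2 (s.erase a) (fun k i j =>
        (-q) ^ (rk s k - 1) • (b a k *
          ((-q) ^ (rk ((s.erase a).erase k) i + rk ((s.erase a).erase k) j - 1) •
            (b i j * qPf q b ((((s.erase a).erase k).erase i).erase j)))))]
      have step7 : ∀ k ∈ s.erase a,
          (∑ i ∈ (s.erase a).erase k, ∑ j ∈ ((s.erase a).erase k).filter (i < ·),
            (-q) ^ (rk s k - 1) • (b a k *
              ((-q) ^ (rk ((s.erase a).erase k) i + rk ((s.erase a).erase k) j - 1) •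
                (b i j * qPf q b ((((s.erase a).erase k).erase i).erase j)))))
          = (∑ t ∈ Finset.range M, q ^ (4 * t)) •
              ((-q) ^ (rk s k - 1) • (b a k * qPf q b ((s.erase a).erase k))) := by
        intro k hk
        have hck : ((s.erase a).erase k).card = 2 * M := by
          rw [Finset.card_erase_of_mem hk, hcard']
          omega
        calc (∑ i ∈ (s.erase a).erase k, ∑ j ∈ ((s.erase a).erase k).filter (i < ·),
            (-q) ^ (rk s k - 1) • (b a k *
              ((-q) ^ (rk ((s.erase a).erase k) i + rk ((s.erase a).erase k) j - 1) •
                (b i j * qPf q b ((((s.erase a).erase k).erase i).erase j)))))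
            = (-q) ^ (rk s k - 1) • (b a k *
                ∑ i ∈ (s.erase a).erase k, ∑ j ∈ ((s.erase a).erase k).filter (i < ·),
                (-q) ^ (rk ((s.erase a).erase k) i + rk ((s.erase a).erase k) j - 1) •
                  (b i j * qPf q b ((((s.erase a).erase k).erase i).erase j))) := by
              simp only [Finset.mul_sum, Finset.smul_sum]
          _ = (-q) ^ (rk s k - 1) • (b a k *
                ((∑ t ∈ Finset.range M, q ^ (4 * t)) • qPf q b ((s.erase a).erase k))) := by
              rw [IH _ hck]
          _ = (∑ t ∈ Finset.range M, q ^ (4 * t)) •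
                ((-q) ^ (rk s k - 1) • (b a k * qPf q b ((s.erase a).erase k))) := by
              rw [mul_smul_comm, smul_comm]
      rw [Finset.sum_congr rfl step7, ← Finset.smul_sum,
        ← qPf_unfold_min q b hcs hne hamin]
      rw [smul_smul]
    rw [part1, part2, Finset.sum_range_succ']
    have hgeom : (∑ t ∈ Finset.range M, q ^ (4 * (t + 1)))
        = q ^ 4 * ∑ t ∈ Finset.range M, q ^ (4 * t) := by
      rw [Finset.mul_sum]
      exact Finset.sum_congr rfl fun t _ => by ring
    rw [hgeom, add_smul, mul_zero, pow_zero, one_smul, add_comm]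
end Main

/-- expansion of the quantum Pfaffian along an arbitrary pair:
`Σ_{i<j} (-q)^{i+j-3} [i,j][1,…,î,…,ĵ,…,2n] = (Σ_{i=0}^{n-1} q^{4i}) [1,…,2n]`
(indices `i,j` are 1-based in the exponent). -/
theorem quantum_pfaffian_pair_expansion
    (F : Type*) [Field F] (q : F) (hq : q ≠ 0) (n : ℕ)
    (A : Type*) [Ring A] [Algebra F A]
    (b : Fin (2 * n) → Fin (2 * n) → A)
    (hb : ∀ i j k l : Fin (2 * n), i < j → j < k → k < l →
      b i j * b k l + (-q) • (b i k * b j l) + (-q) ^ 2 • (b i l * b j k)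
        = b k l * b i j + (-q) ^ (-1 : ℤ) • (b j l * b i k)
            + (-q) ^ (-2 : ℤ) • (b j k * b i l)) :
    ∑ p ∈ (Finset.univ : Finset (Fin (2 * n) × Fin (2 * n))).filter
        (fun p => p.1 < p.2),
      (-q) ^ (((p.1 : ℤ) + 1) + ((p.2 : ℤ) + 1) - 3) •
        (b p.1 p.2 * qPf q b ({p.1, p.2} : Finset (Fin (2 * n)))ᶜ)
      = (∑ i ∈ Finset.range n, q ^ (4 * i)) • qPf q b Finset.univ := by
  have hcard : (Finset.univ : Finset (Fin (2 * n))).card = 2 * n := by simp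
  have hrk : ∀ x : Fin (2 * n), rk Finset.univ x = x.val := by
    intro x
    unfold rk
    rw [show Finset.univ.filter (· < x) = Finset.Iio x from by
      ext w; simp [Finset.mem_Iio], Fin.card_Iio]
  rw [← GT hq b hb n Finset.univ hcard]
  rw [Finset.sum_filter, ← Finset.univ_product_univ, Finset.sum_product]
  refine Finset.sum_congr rfl fun i _ => ?_
  rw [Finset.sum_filter]
  refine Finset.sum_congr rfl fun j _ => ?_
  by_cases hij : i < j
  · rw [if_pos hij, if_pos hij]
    have hset : ({i, j} : Finset (Fin (2 * n)))ᶜ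
        = (Finset.univ.erase i).erase j := by
      ext w
      simp only [Finset.mem_compl, Finset.mem_insert, Finset.mem_singleton,
        Finset.mem_erase, Finset.mem_univ, and_true]
      tauto
    have hv : (i : ℕ) < (j : ℕ) := hij
    have hexp : (((i : ℤ) + 1) + ((j : ℤ) + 1) - 3)
        = (((i : ℕ) + (j : ℕ) - 1 : ℕ) : ℤ) := by omega
    rw [hset, hexp, zpow_natCast, hrk i, hrk j]
  · rw [if_neg hij, if_neg hij]
end
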